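/- arXiv:2007.10165 — 3 statements merged into one kernel-verified Lean document; each statement's English description precedes it below -/
import Mathlib

section
/- Let A, B ⊂ ℙⁿ be disjoint finite sets of points (no vector representing a point of A is proportional to a vector representing a point of B), and let d ∈ ℕ. Assume that the family {L_v^d : v ∈ A} is linearly independent in R_d and likewise for {L_v^d : v ∈ B}. Set Z = A ∪ B. Then the ℂ-vector space dimension of span{L_v^d : v ∈ A} ∩ span{L_v^d : v ∈ B} equals ℓ(Z) − h_Z(d). -/
open MvPolynomial BigOperators

noncomputable section

/-- The linear form `a₀x₀ + ⋯ + a_{N-1}x_{N-1}` associated to a coefficient vector. -/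
def linForm {N : ℕ} (v : Fin N → ℂ) : MvPolynomial (Fin N) ℂ :=
  ∑ i, C (v i) * X i

/-- A finite set of nonzero, pairwise non-proportional vectors, representing a finite
set of points in projective space. -/
def ValidPoints {N : ℕ} (A : Finset (Fin N → ℂ)) : Prop :=
  (∀ v ∈ A, v ≠ 0) ∧ ∀ v ∈ A, ∀ w ∈ A, v ≠ w → ∀ c : ℂ, w ≠ c • v

/-- Two sets of points are (projectively) disjoint: no vector of one is proportional to a
vector of the other. -/
def ProjDisjoint {N : ℕ} (A B : Finset (Fin N → ℂ)) : Prop :=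
  ∀ v ∈ A, ∀ w ∈ B, ∀ c : ℂ, w ≠ c • v

/-- Two sets of points coincide as sets of projective points. -/
def ProjEq {N : ℕ} (A B : Finset (Fin N → ℂ)) : Prop :=
  (∀ v ∈ A, ∃ w ∈ B, ∃ c : ℂ, w = c • v) ∧ (∀ w ∈ B, ∃ v ∈ A, ∃ c : ℂ, w = c • v)

/-- `A` computes the degree-`d` form `T`: `T` lies in the span of the `d`-th powers of the
linear forms associated to the points of `A`. -/
def Computes {N : ℕ} (A : Finset (Fin N → ℂ)) (d : ℕ) (T : MvPolynomial (Fin N) ℂ) : Prop :=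
  T ∈ Submodule.span ℂ ((fun v => linForm v ^ d) '' (A : Set (Fin N → ℂ)))

/-- `A` is a non-redundant decomposition of `T`: it computes `T` and no proper subset does. -/
def NonRedundant {N : ℕ} (A : Finset (Fin N → ℂ)) (d : ℕ)
    (T : MvPolynomial (Fin N) ℂ) : Prop :=
  Computes A d T ∧ ∀ A' ⊂ A, ¬ Computes A' d T

/-- The evaluation map on forms of degree `j`. -/
def evalMap {N : ℕ} (A : Finset (Fin N → ℂ)) (j : ℕ) :
    (homogeneousSubmodule (Fin N) ℂ j) →ₗ[ℂ] (↥A → ℂ) :=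
  LinearMap.pi fun v : ↥A =>
    (aeval (v.1 : Fin N → ℂ)).toLinearMap ∘ₗ (homogeneousSubmodule (Fin N) ℂ j).subtype

/-- The Hilbert function of a finite set of points: the rank of the evaluation map in each
degree, and `0` in negative degrees. -/
def hilb {N : ℕ} (A : Finset (Fin N → ℂ)) (j : ℤ) : ℤ :=
  if j < 0 then 0 else (Module.finrank ℂ (LinearMap.range (evalMap A j.toNat)) : ℤ)

/-- The first difference of the Hilbert function. -/
def Dhilb {N : ℕ} (A : Finset (Fin N → ℂ)) (j : ℤ) : ℤ :=
  hilb A j - hilb A (j - 1)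

/-- `Dhilb Z` takes the values prescribed by the list `l` in degrees `0, …, l.length - 1`. -/
def DhProfile {N : ℕ} (Z : Finset (Fin N → ℂ)) (l : List ℤ) : Prop :=
  ∀ j : ℕ, j < l.length → Dhilb Z (j : ℤ) = l.getD j 0

/-- The homogeneous ideal of a finite set of points: all polynomials vanishing at every
representative vector. -/
def pointsIdeal {N : ℕ} (A : Finset (Fin N → ℂ)) : Ideal (MvPolynomial (Fin N) ℂ) :=
  ⨅ v ∈ A, RingHom.ker (eval v)

/-- The degree-`j` graded piece `(I_A)_j` of the homogeneous ideal of `A`, as a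
`ℂ`-subspace of the polynomial ring. -/
def idealPiece {N : ℕ} (A : Finset (Fin N → ℂ)) (j : ℕ) :
    Submodule ℂ (MvPolynomial (Fin N) ℂ) :=
  (Submodule.restrictScalars ℂ (pointsIdeal A)) ⊓ homogeneousSubmodule (Fin N) ℂ j

/-- The `d`-th Kruskal rank of `A`: the largest `k` (at most `ℓ(A)`) such that for every
subset `A' ⊆ A` with `ℓ(A') ≤ k` the powers `{L_v^d : v ∈ A'}` are linearly independent. -/
def kruskalRank {N : ℕ} (A : Finset (Fin N → ℂ)) (d : ℕ) : ℕ :=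
  sSup {k : ℕ | k ≤ A.card ∧ ∀ A' ⊆ A, A'.card ≤ k →
    LinearIndependent ℂ (fun v : ↥A' => linForm (v.1 : Fin N → ℂ) ^ d)}

/-- The Cayley–Bacharach property `CB(i)`: every form of degree `i` vanishing on `Z`
minus one point also vanishes at that point. -/
def CayleyBacharach {N : ℕ} (Z : Finset (Fin N → ℂ)) (i : ℕ) : Prop :=
  ∀ P ∈ Z, ∀ F : MvPolynomial (Fin N) ℂ, F.IsHomogeneous i →
    (∀ v ∈ Z.erase P, eval v F = 0) → eval P F = 0

end


namespace Stmt0Aux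
open Finset

lemma prod_X_pow_eq {N : ℕ} (k : Fin N → ℕ) :
    (∏ i, (X i : MvPolynomial (Fin N) ℂ) ^ k i) =
      monomial (Finsupp.equivFunOnFinite.symm k) 1 := by
  rw [monomial_eq, C_1, one_mul]
  rw [Finsupp.prod_fintype]
  · rfl
  · intro i; exact pow_zero _

lemma coeff_linForm_pow {N d : ℕ} (v : Fin N → ℂ) (α : Fin N →₀ ℕ) :
    coeff α (linForm v ^ d) =
      if (∑ i, α i) = d then (Nat.multinomial Finset.univ α : ℂ) * ∏ i, v i ^ α i else 0 := by
  rw [linForm, Finset.sum_pow_eq_sum_piAntidiag]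
  have hterm : ∀ k : Fin N → ℕ,
      (Nat.multinomial Finset.univ k : MvPolynomial (Fin N) ℂ) * ∏ i, (C (v i) * X i) ^ k i =
        monomial (Finsupp.equivFunOnFinite.symm k)
          ((Nat.multinomial Finset.univ k : ℂ) * ∏ i, v i ^ k i) := by
    intro k
    simp_rw [mul_pow, ← C_pow]
    rw [Finset.prod_mul_distrib, ← map_prod, prod_X_pow_eq,
      ← map_natCast (C : ℂ →+* MvPolynomial (Fin N) ℂ), ← mul_assoc, ← map_mul,
      C_mul_monomial, mul_one]
  simp_rw [hterm]
  rw [coeff_sum]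
  simp_rw [coeff_monomial]
  have hcond : ∀ k : Fin N → ℕ, (Finsupp.equivFunOnFinite.symm k = α) ↔ k = ⇑α := by
    intro k
    constructor
    · intro h; rw [← h]; rfl
    · intro h; subst h; exact Finsupp.equivFunOnFinite.symm_apply_apply α
  simp_rw [hcond]
  rw [Finset.sum_ite_eq' (univ.piAntidiag d) (⇑α)
    (fun k => (Nat.multinomial Finset.univ k : ℂ) * ∏ i, v i ^ k i)]
  simp [mem_piAntidiag]

lemma degree_eq_sum_univ {N : ℕ} (α : Fin N →₀ ℕ) : α.degree = ∑ i, α i := by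
  rw [Finsupp.degree]
  exact Finset.sum_subset (Finset.subset_univ _)
    (fun i _ h => by simpa using Finsupp.notMem_support_iff.mp h)

lemma span_key {N d : ℕ} (Z : Finset (Fin N → ℂ)) (c : ↥Z → ℂ) :
    (∑ v : ↥Z, c v • linForm (v.1 : Fin N → ℂ) ^ d = 0) ↔
      ∀ α : Fin N →₀ ℕ, (∑ i, α i) = d →
        ∑ v : ↥Z, c v * ∏ i, (v.1 : Fin N → ℂ) i ^ α i = 0 := by
  constructor
  · intro h α hα
    have h0 := congrArg (coeff α) h
    rw [coeff_zero] at h0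
    rw [coeff_sum] at h0
    simp_rw [coeff_smul, coeff_linForm_pow, if_pos hα, smul_eq_mul] at h0
    have hm : (Nat.multinomial (Finset.univ : Finset (Fin N)) α : ℂ) ≠ 0 :=
      Nat.cast_ne_zero.mpr (Nat.multinomial_pos _ _).ne'
    have h1 : (Nat.multinomial Finset.univ α : ℂ) *
        ∑ v : ↥Z, c v * ∏ i, (v.1 : Fin N → ℂ) i ^ α i = 0 := by
      rw [Finset.mul_sum, ← h0]
      exact Finset.sum_congr rfl fun v _ => by ring
    exact (mul_eq_zero.mp h1).resolve_left hm
  · intro h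
    ext α
    rw [coeff_sum, coeff_zero]
    simp_rw [coeff_smul, coeff_linForm_pow, smul_eq_mul]
    by_cases hα : (∑ i, α i) = d
    · simp_rw [if_pos hα]
      have := h α hα
      calc ∑ v : ↥Z, c v * ((Nat.multinomial Finset.univ α : ℂ) * ∏ i, (v.1 : Fin N → ℂ) i ^ α i)
          = (Nat.multinomial Finset.univ α : ℂ) * ∑ v : ↥Z, c v * ∏ i, (v.1 : Fin N → ℂ) i ^ α i := by
            rw [Finset.mul_sum]; exact Finset.sum_congr rfl fun v _ => by ring
        _ = 0 := by rw [this, mul_zero]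
    · simp [if_neg hα]

lemma toDual_pi {ι : Type*} [Fintype ι] [DecidableEq ι] (c x : ι → ℂ) :
    (Pi.basisFun ℂ ι).toDual c x = ∑ i, x i * c i := by
  conv_lhs => rw [← Module.Basis.sum_repr (Pi.basisFun ℂ ι) x]
  rw [map_sum]
  simp [← Pi.basisFun_apply, Module.Basis.toDual_eq_repr, Pi.basisFun_repr]

lemma evalMap_apply {N d : ℕ} (Z : Finset (Fin N → ℂ)) (F : homogeneousSubmodule (Fin N) ℂ d)
    (v : ↥Z) : evalMap Z d F v = eval (v.1 : Fin N → ℂ) F.1 := by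
  show aeval (v.1 : Fin N → ℂ) F.1 = eval (v.1 : Fin N → ℂ) F.1
  exact RingHom.congr_fun (coe_aeval_eq_eval (v.1 : Fin N → ℂ)) F.1

lemma finrank_range_evalMap {N d : ℕ} (Z : Finset (Fin N → ℂ)) :
    Module.finrank ℂ (LinearMap.range (evalMap Z d)) =
      Module.finrank ℂ
        (Submodule.span ℂ ((fun v => linForm v ^ d) '' (Z : Set (Fin N → ℂ)))) := by
  classical
  set P := homogeneousSubmodule (Fin N) ℂ d
  set e := evalMap Z d
  set Φ : (↥Z → ℂ) →ₗ[ℂ] MvPolynomial (Fin N) ℂ :=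
    Fintype.linearCombination ℂ (fun v : ↥Z => linForm (v.1 : Fin N → ℂ) ^ d) with hΦ
  have hrange : LinearMap.range Φ =
      Submodule.span ℂ ((fun v => linForm v ^ d) '' (Z : Set (Fin N → ℂ))) := by
    rw [hΦ, Fintype.range_linearCombination]
    congr 1
    ext x
    simp [Set.range, Set.mem_image]
  have hE : ∀ (F : P) (v : ↥Z), e F v = eval (v.1 : Fin N → ℂ) F.1 :=
    fun F v => evalMap_apply Z F v
  have hker : ∀ c : ↥Z → ℂ,
      Φ c = 0 ↔ ∀ F : P, ∑ v : ↥Z, e F v * c v = 0 := by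
    intro c
    rw [hΦ, Fintype.linearCombination_apply, span_key]
    constructor
    · intro h F
      have hF := F.2
      rw [mem_homogeneousSubmodule] at hF
      rw [show (F.1 : MvPolynomial (Fin N) ℂ) = F.1 from rfl] at hF
      calc ∑ v : ↥Z, e F v * c v
          = ∑ v : ↥Z, (∑ α ∈ F.1.support, coeff α F.1 * ∏ i, (v.1 : Fin N → ℂ) i ^ α i) * c v := by
            refine Finset.sum_congr rfl fun v _ => ?_
            rw [hE, eval_eq']
        _ = ∑ α ∈ F.1.support, coeff α F.1 * ∑ v : ↥Z, c v * ∏ i, (v.1 : Fin N → ℂ) i ^ α i := by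
            simp_rw [Finset.sum_mul, Finset.mul_sum]
            rw [Finset.sum_comm]
            exact Finset.sum_congr rfl fun α _ => Finset.sum_congr rfl fun v _ => by ring
        _ = 0 := by
            refine Finset.sum_eq_zero fun α hα => ?_
            have hdeg : α.degree = d := by
              rw [Finsupp.degree_eq_weight_one]; exact hF (mem_support_iff.mp hα)
            rw [h α (by rw [← degree_eq_sum_univ, hdeg]), mul_zero]
    · intro h α hα
      have hmon : (monomial α (1:ℂ)) ∈ P :=
        isHomogeneous_monomial _ (by rw [degree_eq_sum_univ, hα])
      have := h ⟨monomial α 1, hmon⟩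
      simp_rw [hE, eval_monomial, one_mul] at this
      rw [← this]
      refine Finset.sum_congr rfl fun v _ => ?_
      rw [Finsupp.prod_fintype _ _ (fun i => pow_zero _)]
      ring
  set η : (↥Z → ℂ) →ₗ[ℂ] Module.Dual ℂ P :=
    e.dualMap ∘ₗ (Pi.basisFun ℂ ↥Z).toDual with hη
  have hkerη : LinearMap.ker η = LinearMap.ker Φ := by
    ext c
    rw [LinearMap.mem_ker, LinearMap.mem_ker, hker]
    constructor
    · intro h F
      have := LinearMap.congr_fun h F
      simpa [hη, toDual_pi] using this
    · intro h
      ext F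
      simpa [hη, toDual_pi] using h F
  have hkerη2 : LinearMap.ker η =
      Submodule.comap ((Pi.basisFun ℂ ↥Z).toDual : (↥Z → ℂ) →ₗ[ℂ] _)
        (LinearMap.range e).dualAnnihilator := by
    ext c
    simp only [LinearMap.mem_ker, Submodule.mem_comap, Submodule.mem_dualAnnihilator, hη]
    constructor
    · rintro h w ⟨F, rfl⟩
      simpa using LinearMap.congr_fun h F
    · intro h
      ext F
      exact h (e F) ⟨F, rfl⟩
  have hann : Module.finrank ℂ (LinearMap.range e).dualAnnihilator
      = Z.card - Module.finrank ℂ (LinearMap.range e) := by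
    have h1 := Submodule.finrank_quotient_add_finrank (LinearMap.range e)
    have h2 := (Subspace.quotEquivAnnihilator (LinearMap.range e)).finrank_eq
    have h3 : Module.finrank ℂ (↥Z → ℂ) = Z.card := by
      simp [Module.finrank_pi]
    omega
  have hcomapfr : Module.finrank ℂ (LinearMap.ker η)
      = Module.finrank ℂ (LinearMap.range e).dualAnnihilator := by
    rw [hkerη2]
    have hco : Submodule.comap ((Pi.basisFun ℂ ↥Z).toDual : (↥Z → ℂ) →ₗ[ℂ] _)
        (LinearMap.range e).dualAnnihilator
        = Submodule.comap ((Pi.basisFun ℂ ↥Z).toDualEquiv : (↥Z → ℂ) →ₗ[ℂ] _)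
          (LinearMap.range e).dualAnnihilator := rfl
    rw [hco, Submodule.comap_equiv_eq_map_symm]
    exact LinearEquiv.finrank_map_eq _ _
  have hΦrn := LinearMap.finrank_range_add_finrank_ker Φ
  have h3 : Module.finrank ℂ (↥Z → ℂ) = Z.card := by simp [Module.finrank_pi]
  have hre : Module.finrank ℂ (LinearMap.range e) ≤ Z.card := by
    have := Submodule.finrank_le (LinearMap.range e)
    rwa [h3] at this
  rw [← hrange]
  rw [h3] at hΦrn
  rw [hkerη, hcomapfr, hann] at *
  omega

end Stmt0Aux

/-- Grassmann formula for the spans of the `d`-th Veronese images of two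
disjoint point sets whose images are linearly independent:
`dim (⟨ν_d(A)⟩ ∩ ⟨ν_d(B)⟩) = ℓ(Z) − h_Z(d)` where `Z = A ∪ B`. -/
theorem stmt_0 {n : ℕ} (d : ℕ) (A B : Finset (Fin (n + 1) → ℂ))
    (hA : ValidPoints A) (hB : ValidPoints B) (hAB : ProjDisjoint A B)
    (hliA : LinearIndependent ℂ (fun v : ↥A => linForm (v.1 : Fin (n + 1) → ℂ) ^ d))
    (hliB : LinearIndependent ℂ (fun v : ↥B => linForm (v.1 : Fin (n + 1) → ℂ) ^ d)) :
    (Module.finrank ℂ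
        ↥(Submodule.span ℂ ((fun v => linForm v ^ d) '' (A : Set (Fin (n + 1) → ℂ))) ⊓
          Submodule.span ℂ ((fun v => linForm v ^ d) '' (B : Set (Fin (n + 1) → ℂ)))) : ℤ)
      = ((A ∪ B).card : ℤ) - hilb (A ∪ B) (d : ℤ) := by
  classical
  have hdisj : Disjoint A B := by
    rw [Finset.disjoint_left]
    intro v hvA hvB
    exact hAB v hvA v hvB 1 (by rw [one_smul])
  set Z := A ∪ B with hZ
  set sA := Submodule.span ℂ ((fun v => linForm v ^ d) '' (A : Set (Fin (n + 1) → ℂ))) with hsA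
  set sB := Submodule.span ℂ ((fun v => linForm v ^ d) '' (B : Set (Fin (n + 1) → ℂ))) with hsB
  have hfdA : FiniteDimensional ℂ sA :=
    FiniteDimensional.span_of_finite ℂ ((A : Set (Fin (n + 1) → ℂ)).toFinite.image _)
  have hfdB : FiniteDimensional ℂ sB :=
    FiniteDimensional.span_of_finite ℂ ((B : Set (Fin (n + 1) → ℂ)).toFinite.image _)
  have himg : ∀ (S : Finset (Fin (n + 1) → ℂ)),
      Set.range (fun v : ↥S => linForm (v.1 : Fin (n + 1) → ℂ) ^ d)
        = (fun v => linForm v ^ d) '' (S : Set (Fin (n + 1) → ℂ)) := by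
    intro S
    ext x
    simp [Set.range, Set.mem_image]
  have hfa : Module.finrank ℂ sA = A.card := by
    rw [hsA, ← himg, finrank_span_eq_card hliA, Fintype.card_coe]
  have hfb : Module.finrank ℂ sB = B.card := by
    rw [hsB, ← himg, finrank_span_eq_card hliB, Fintype.card_coe]
  have hsup : sA ⊔ sB
      = Submodule.span ℂ ((fun v => linForm v ^ d) '' (Z : Set (Fin (n + 1) → ℂ))) := by
    rw [hsA, hsB, ← Submodule.span_union, ← Set.image_union, hZ, Finset.coe_union]
  have hgrass := Submodule.finrank_sup_add_finrank_inf_eq sA sB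
  have hcard : Z.card = A.card + B.card := Finset.card_union_of_disjoint hdisj
  have hhilb : hilb Z (d : ℤ) =
      (Module.finrank ℂ (LinearMap.range (evalMap Z d)) : ℤ) := by
    rw [hilb, if_neg (by omega : ¬ (d : ℤ) < 0)]
    simp
  rw [hhilb, Stmt0Aux.finrank_range_evalMap, ← hsup]
  have hle : Module.finrank ℂ ↥(sA ⊔ sB) ≤ A.card + B.card := by omega
  push_cast
  omega
end

section
/- Let T ∈ R_d be a form of degree d in n+1 variables and let A, B ⊂ ℙⁿ be disjoint finite sets, each non-redundant and computing T. Set Z = A ∪ B. Then Dh_Z(d+1) > 0, i.e. h_Z(d+1) > h_Z(d). -/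
open MvPolynomial BigOperators

/-! ### Auxiliary lemmas -/

noncomputable section

def dotC {N : ℕ} (u z : Fin N → ℂ) : ℂ := ∑ i, u i * z i

lemma aeval_eq_eval {N : ℕ} (x : Fin N → ℂ) (p : MvPolynomial (Fin N) ℂ) :
    aeval x p = eval x p := by
  rw [aeval_def, Algebra.algebraMap_self]; rfl

lemma eval_linForm' {N : ℕ} (v x : Fin N → ℂ) :
    eval x (linForm v) = dotC v x := by
  simp [linForm, dotC]

lemma isHomogeneous_linForm {N : ℕ} (v : Fin N → ℂ) :
    (linForm v).IsHomogeneous 1 :=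
  MvPolynomial.IsHomogeneous.sum _ _ _ fun i _ => (isHomogeneous_X ℂ i).C_mul _

lemma sum_single_mul {N : ℕ} (j : Fin N) (a : ℂ) (w : Fin N → ℂ) :
    ∑ k, (Pi.single j a : Fin N → ℂ) k * w k = a * w j := by
  rw [Finset.sum_eq_single j] <;> simp +contextual [Pi.single_apply]

lemma linForm_ne_zero {N : ℕ} {v : Fin N → ℂ} (hv : v ≠ 0) : linForm v ≠ 0 := by
  intro h
  apply hv
  funext i
  have h0 := congrArg (eval (Pi.single i 1)) h
  rw [eval_linForm', map_zero] at h0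
  have h2 : dotC v (Pi.single i 1) = v i := by
    rw [dotC, Finset.sum_eq_single i] <;> simp +contextual [Pi.single_apply]
  rw [h2] at h0
  exact h0

lemma exists_nonvanish {N : ℕ} (Z : Finset (Fin N → ℂ)) (hz0 : ∀ z ∈ Z, z ≠ 0) :
    ∃ u : Fin N → ℂ, ∀ z ∈ Z, dotC u z ≠ 0 := by
  by_contra h
  push_neg at h
  have hP : (∏ z ∈ Z, linForm z) ≠ 0 :=
    Finset.prod_ne_zero_iff.2 fun z hz => linForm_ne_zero (hz0 z hz)
  apply hP
  apply MvPolynomial.funext (q := 0)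
  intro x
  obtain ⟨z, hz, hx⟩ := h x
  rw [map_prod, map_zero]
  refine Finset.prod_eq_zero hz ?_
  rw [eval_linForm', dotC]
  rw [dotC] at hx
  rw [← hx]
  exact Finset.sum_congr rfl fun i _ => mul_comm _ _

lemma exists_separating {N : ℕ} {z z' : Fin N → ℂ} (hz' : z' ≠ 0)
    (hprop : ∀ c : ℂ, z ≠ c • z') :
    ∃ u : Fin N → ℂ, dotC u z' = 0 ∧ dotC u z ≠ 0 := by
  simp only [dotC]
  by_contra h
  push_neg at h
  obtain ⟨j, hj⟩ : ∃ j, z' j ≠ 0 := by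
    by_contra hc; push_neg at hc; exact hz' (funext hc)
  set u₀ : Fin N → ℂ := Pi.single j (z' j)⁻¹ with hu₀
  have hfu₀ : ∑ i, u₀ i * z' i = 1 := by
    rw [hu₀, sum_single_mul, inv_mul_cancel₀ hj]
  set c : ℂ := ∑ i, u₀ i * z i with hc
  apply hprop c
  funext i
  have key := h (Pi.single i 1 - ((∑ k, (Pi.single i 1 : Fin N → ℂ) k * z' k)) • u₀)
    (by
      simp only [Pi.sub_apply, Pi.smul_apply, smul_eq_mul, sub_mul, mul_assoc,
        Finset.sum_sub_distrib, ← Finset.mul_sum]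
      rw [hfu₀, mul_one, sub_self])
  simp only [Pi.sub_apply, Pi.smul_apply, smul_eq_mul, sub_mul, mul_assoc,
    Finset.sum_sub_distrib, ← Finset.mul_sum, ← hc] at key
  have h1 : ∑ k, (Pi.single i 1 : Fin N → ℂ) k * z k = z i := by
    rw [sum_single_mul, one_mul]
  have h2 : ∑ k, (Pi.single i 1 : Fin N → ℂ) k * z' k = z' i := by
    rw [sum_single_mul, one_mul]
  rw [h1, h2, sub_eq_zero] at key
  rw [key, Pi.smul_apply, smul_eq_mul, mul_comm]

lemma coeff_linForm_pow {N d : ℕ} (v : Fin N → ℂ) (α : Fin N →₀ ℕ)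
    (hα : ∑ i, α i = d) :
    coeff α (linForm v ^ d) =
      (Nat.multinomial Finset.univ ⇑α : ℂ) * ∏ i, v i ^ α i := by
  classical
  rw [linForm, Finset.sum_pow_eq_sum_piAntidiag, coeff_sum]
  have hterm : ∀ k : Fin N → ℕ,
      coeff α ((Nat.multinomial Finset.univ k : MvPolynomial (Fin N) ℂ) *
        ∏ i, (C (v i) * X i) ^ k i) =
      if k = ⇑α then
        (Nat.multinomial Finset.univ k : ℂ) * ∏ i, v i ^ k i else 0 := by
    intro k
    have h2 : ∏ i, (X i : MvPolynomial (Fin N) ℂ) ^ k i =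
        monomial (Finsupp.equivFunOnFinite.symm k) 1 := by
      rw [← prod_X_pow_eq_monomial]
      exact (Finset.prod_subset (Finset.subset_univ _) (by simp +contextual)).symm
    have h1 : ∏ i, (C (v i) * X i) ^ k i =
        C (∏ i, v i ^ k i) * monomial (Finsupp.equivFunOnFinite.symm k) 1 := by
      rw [← h2, map_prod, ← Finset.prod_mul_distrib]
      exact Finset.prod_congr rfl fun i _ => by rw [mul_pow, C_pow]
    have h3 : (Finsupp.equivFunOnFinite.symm k = α) ↔ k = ⇑α := by
      constructor
      · rintro rfl; exact funext fun i => rfl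
      · rintro rfl; exact Finsupp.equivFunOnFinite_symm_coe α
    rw [h1, ← map_natCast (C : ℂ →+* MvPolynomial (Fin N) ℂ), ← mul_assoc, ← map_mul,
      coeff_C_mul, coeff_monomial]
    by_cases h : k = ⇑α
    · rw [if_pos ((h3.2 h)), if_pos h]; simp
    · rw [if_neg (fun hh => h (h3.1 hh)), if_neg h]; simp
  rw [Finset.sum_congr rfl fun k _ => hterm k, Finset.sum_ite_eq' _ ⇑α
    (fun k => (Nat.multinomial Finset.univ k : ℂ) * ∏ i, v i ^ k i)]
  rw [if_pos]
  simp only [Finset.mem_piAntidiag]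
  exact ⟨hα, fun i _ => Finset.mem_univ i⟩

lemma support_degree_eq {N d : ℕ} {F : MvPolynomial (Fin N) ℂ}
    (hF : F.IsHomogeneous d) {α : Fin N →₀ ℕ} (hα : α ∈ F.support) :
    ∑ i, α i = d := by
  have h1 : Finsupp.weight 1 α = d := hF (mem_support_iff.1 hα)
  change Finsupp.weight (fun _ => 1) α = d at h1; rw [← Finsupp.degree_eq_weight_one] at h1
  rw [← h1, Finsupp.degree]
  exact (Finset.sum_subset (Finset.subset_univ _)
    (fun i _ hi => Finsupp.notMem_support_iff.1 hi)).symm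

/-- The apolarity pairing functional associated to `F`. -/
def apolar {N : ℕ} (F : MvPolynomial (Fin N) ℂ) :
    MvPolynomial (Fin N) ℂ →ₗ[ℂ] ℂ :=
  ∑ α ∈ F.support, (coeff α F * (Nat.multinomial Finset.univ ⇑α : ℂ)⁻¹) • lcoeff ℂ α

lemma apolar_linForm_pow {N d : ℕ} {F : MvPolynomial (Fin N) ℂ}
    (hF : F.IsHomogeneous d) (z : Fin N → ℂ) :
    apolar F (linForm z ^ d) = eval z F := by
  rw [apolar, LinearMap.sum_apply, eval_eq']
  refine Finset.sum_congr rfl fun α hα => ?_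
  rw [LinearMap.smul_apply, lcoeff_apply, coeff_linForm_pow z α (support_degree_eq hF hα),
    smul_eq_mul]
  have hm : (Nat.multinomial Finset.univ ⇑α : ℂ) ≠ 0 :=
    Nat.cast_ne_zero.2 (Nat.multinomial_pos _ _).ne'
  field_simp

/-- Pointwise multiplication by a fixed function, as a linear map. -/
def mulMap {ι : Type*} (g : ι → ℂ) : (ι → ℂ) →ₗ[ℂ] (ι → ℂ) where
  toFun f := fun z => g z * f z
  map_add' f f' := by funext z; simp [mul_add]
  map_smul' c f := by funext z; simp; ring

end

set_option maxHeartbeats 1000000 in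
set_option synthInstance.maxHeartbeats 400000 in
/-- if `A, B` are disjoint non-redundant decompositions of a nonzero form `T`
of degree `d`, then `Dh_Z(d+1) > 0` for `Z = A ∪ B`. -/
theorem stmt_1 {n d : ℕ} (T : MvPolynomial (Fin (n + 1)) ℂ)
    (hT : T.IsHomogeneous d) (hT0 : T ≠ 0)
    (A B : Finset (Fin (n + 1) → ℂ)) (hA : ValidPoints A) (hB : ValidPoints B)
    (hAB : ProjDisjoint A B)
    (hAnr : NonRedundant A d T) (hBnr : NonRedundant B d T) :
    0 < Dhilb (A ∪ B) ((d : ℤ) + 1) := by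
  classical
  set Z : Finset (Fin (n+1) → ℂ) := A ∪ B with hZ
  have hz0 : ∀ z ∈ Z, z ≠ 0 := by
    intro z hz
    rcases Finset.mem_union.1 hz with h | h
    exacts [hA.1 z h, hB.1 z h]
  have hpair : ∀ z ∈ Z, ∀ z' ∈ Z, z ≠ z' → ∀ c : ℂ, z ≠ c • z' := by
    intro z hz z' hz' hne c
    rcases Finset.mem_union.1 hz with h1 | h1 <;> rcases Finset.mem_union.1 hz' with h2 | h2
    · exact hA.2 z' h2 z h1 (Ne.symm hne) c
    · intro hcon
      have hc : c ≠ 0 := by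
        rintro rfl; rw [zero_smul] at hcon; exact hA.1 z h1 hcon
      exact hAB z h1 z' h2 c⁻¹ (by rw [hcon, smul_smul, inv_mul_cancel₀ hc, one_smul])
    · exact hAB z' h2 z h1 c
    · exact hB.2 z' h2 z h1 (Ne.symm hne) c
  have memV : ∀ (j : ℕ) (f : ↥Z → ℂ), f ∈ LinearMap.range (evalMap Z j) ↔
      ∃ F : MvPolynomial (Fin (n+1)) ℂ, F.IsHomogeneous j ∧
        ∀ z : ↥Z, eval (z : Fin (n+1) → ℂ) F = f z := by
    intro j f
    constructor
    · rintro ⟨⟨F, hF⟩, rfl⟩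
      refine ⟨F, (mem_homogeneousSubmodule _ _).1 hF, fun z => ?_⟩
      simp [evalMap, aeval_eq_eval]
    · rintro ⟨F, hF, hev⟩
      refine ⟨⟨F, (mem_homogeneousSubmodule _ _).2 hF⟩, ?_⟩
      funext z
      simp [evalMap, aeval_eq_eval, hev z]
  have hDh : Dhilb Z ((d:ℤ)+1) =
      (Module.finrank ℂ (LinearMap.range (evalMap Z (d+1))) : ℤ) -
      (Module.finrank ℂ (LinearMap.range (evalMap Z d)) : ℤ) := by
    have hilbNat : ∀ j : ℕ, hilb Z (j:ℤ) =
        (Module.finrank ℂ (LinearMap.range (evalMap Z j)) : ℤ) := by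
      intro j
      rw [hilb, if_neg (by omega)]
      exact congrArg (fun k => (Module.finrank ℂ (LinearMap.range (evalMap Z k)) : ℤ))
        (Int.toNat_natCast j)
    have hc1 : ((d:ℤ)+1) = ((d+1:ℕ):ℤ) := by push_cast; ring
    have hc2 : (((d+1:ℕ):ℤ) - 1) = ((d:ℕ):ℤ) := by push_cast; ring
    rw [Dhilb, hc1, hc2, hilbNat, hilbNat]
  rw [hDh]
  suffices hlt : Module.finrank ℂ (LinearMap.range (evalMap Z d)) <
      Module.finrank ℂ (LinearMap.range (evalMap Z (d+1))) by omega
  by_contra hle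
  push_neg at hle
  -- multiplication structure
  have mulV : ∀ (u : Fin (n+1) → ℂ) (j : ℕ) (f : ↥Z → ℂ),
      f ∈ LinearMap.range (evalMap Z j) →
      (fun z : ↥Z => dotC u z.1 * f z) ∈ LinearMap.range (evalMap Z (j+1)) := by
    intro u j f hf
    obtain ⟨F, hF, hev⟩ := (memV j f).1 hf
    refine (memV _ _).2 ⟨linForm u * F, ?_, fun z => ?_⟩
    · simpa [add_comm] using (isHomogeneous_linForm u).mul hF
    · rw [map_mul, eval_linForm', hev z]
  have powV : ∀ (u : Fin (n+1) → ℂ) (j : ℕ),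
      (fun z : ↥Z => (dotC u z.1)^j) ∈ LinearMap.range (evalMap Z j) := by
    intro u j
    refine (memV _ _).2 ⟨linForm u ^ j, ?_, fun z => ?_⟩
    · simpa using (isHomogeneous_linForm u).pow j
    · rw [map_pow, eval_linForm']
  obtain ⟨u₀, hu₀⟩ := exists_nonvanish Z hz0
  have hg₀ne : ∀ z : ↥Z, dotC u₀ z.1 ≠ 0 := fun z => hu₀ z.1 z.2
  set g₀ : ↥Z → ℂ := fun z => dotC u₀ z.1 with hg₀
  have hmaple : Submodule.map (mulMap g₀) (LinearMap.range (evalMap Z d)) ≤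
      LinearMap.range (evalMap Z (d+1)) := by
    rintro f ⟨f', hf', rfl⟩
    exact mulV u₀ d f' hf'
  haveI : Module.Finite ℂ (↥Z → ℂ) := Module.Finite.pi
  haveI : FiniteDimensional ℂ ↥(LinearMap.range (evalMap Z (d+1))) :=
    FiniteDimensional.finiteDimensional_submodule _
  let E : (↥Z → ℂ) ≃ₗ[ℂ] (↥Z → ℂ) :=
    LinearEquiv.ofLinear (mulMap g₀) (mulMap fun z => (g₀ z)⁻¹)
      (by
        apply LinearMap.ext; intro f; funext z
        simp [mulMap]; exact mul_inv_cancel_left₀ (hg₀ne z) _)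
      (by
        apply LinearMap.ext; intro f; funext z
        simp [mulMap]; exact inv_mul_cancel_left₀ (hg₀ne z) _)
  have hrk : Module.finrank ℂ (Submodule.map (mulMap g₀) (LinearMap.range (evalMap Z d))) =
      Module.finrank ℂ (LinearMap.range (evalMap Z d)) :=
    LinearEquiv.finrank_map_eq E _
  have hVeq : Submodule.map (mulMap g₀) (LinearMap.range (evalMap Z d)) =
      LinearMap.range (evalMap Z (d+1)) :=
    Submodule.eq_of_le_of_finrank_le hmaple (by rw [hrk]; exact hle)
  have key : ∀ (u : Fin (n+1) → ℂ) (f : ↥Z → ℂ), f ∈ LinearMap.range (evalMap Z d) →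
      (fun z : ↥Z => (g₀ z)⁻¹ * (dotC u z.1 * f z)) ∈ LinearMap.range (evalMap Z d) := by
    intro u f hf
    have h1 : (fun z : ↥Z => dotC u z.1 * f z) ∈ LinearMap.range (evalMap Z (d+1)) :=
      mulV u d f hf
    rw [← hVeq] at h1
    obtain ⟨f', hf', hEq⟩ := h1
    have hfeq : (fun z : ↥Z => (g₀ z)⁻¹ * (dotC u z.1 * f z)) = f' := by
      funext z
      have hz := congrFun hEq z
      rw [← hz]
      show (g₀ z)⁻¹ * (g₀ z * f' z) = f' z
      rw [inv_mul_cancel_left₀ (hg₀ne z)]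
    rw [hfeq]; exact hf'
  -- indicator function at any point of Z
  have indicator : ∀ z₀ ∈ Z, ∃ c : ℂ, c ≠ 0 ∧
      (fun z : ↥Z => if z.1 = z₀ then c else 0) ∈ LinearMap.range (evalMap Z d) := by
    intro z₀ hz₀
    have hsep : ∀ z' ∈ Z.erase z₀, ∃ u, dotC u z' = 0 ∧ dotC u z₀ ≠ 0 := by
      intro z' hz'
      obtain ⟨hne, hz'Z⟩ := Finset.mem_erase.1 hz'
      exact exists_separating (hz0 z' hz'Z) (hpair z₀ hz₀ z' hz'Z (Ne.symm hne))
    choose! w hw1 hw2 using hsep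
    have prodInv : ∀ s : Finset (Fin (n+1) → ℂ), s ⊆ Z.erase z₀ →
        (fun z : ↥Z => (∏ z' ∈ s, ((g₀ z)⁻¹ * dotC (w z') z.1)) * (g₀ z)^d) ∈
          LinearMap.range (evalMap Z d) := by
      intro s
      induction s using Finset.cons_induction with
      | empty => intro _; simpa using powV u₀ d
      | cons a s ha ih =>
        intro hsub
        have h1 := key (w a) _ (ih (Finset.cons_subset.1 hsub).2)
        have heq : (fun z : ↥Z =>
            (∏ z' ∈ Finset.cons a s ha, ((g₀ z)⁻¹ * dotC (w z') z.1)) * (g₀ z)^d)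
            = fun z : ↥Z => (g₀ z)⁻¹ *
              (dotC (w a) z.1 * ((∏ z' ∈ s, ((g₀ z)⁻¹ * dotC (w z') z.1)) * (g₀ z)^d)) := by
          funext z
          rw [Finset.prod_cons]
          ring
        rw [heq]; exact h1
    have hq := prodInv (Z.erase z₀) subset_rfl
    set q : ↥Z → ℂ :=
      fun z => (∏ z' ∈ Z.erase z₀, ((g₀ z)⁻¹ * dotC (w z') z.1)) * (g₀ z)^d with hqdef
    refine ⟨q ⟨z₀, hz₀⟩, ?_, ?_⟩
    · rw [hqdef]
      refine mul_ne_zero (Finset.prod_ne_zero_iff.2 fun z' hz' =>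
        mul_ne_zero (inv_ne_zero (hg₀ne _)) (hw2 z' hz')) (pow_ne_zero _ (hg₀ne _))
    · have hfq : (fun z : ↥Z => if z.1 = z₀ then q ⟨z₀, hz₀⟩ else 0) = q := by
        funext z
        by_cases hzz : z.1 = z₀
        · rw [if_pos hzz]
          have hsub : (⟨z₀, hz₀⟩ : ↥Z) = z := Subtype.ext hzz.symm
          rw [hsub]
        · rw [if_neg hzz]
          symm
          rw [hqdef]
          apply mul_eq_zero_of_left
          have hmem : z.1 ∈ Z.erase z₀ := Finset.mem_erase.2 ⟨hzz, z.2⟩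
          refine Finset.prod_eq_zero hmem ?_
          rw [hw1 z.1 hmem, mul_zero]
      rw [hfq]; exact hq
  -- A is nonempty
  have hAne : A.Nonempty := by
    rw [Finset.nonempty_iff_ne_empty]
    rintro rfl
    have h0 := hAnr.1
    rw [Computes] at h0
    simp only [Finset.coe_empty, Set.image_empty, Submodule.span_empty,
      Submodule.mem_bot] at h0
    exact hT0 h0
  obtain ⟨a₀, ha₀⟩ := hAne
  have ha₀Z : a₀ ∈ Z := Finset.mem_union_left _ ha₀
  obtain ⟨c, hc0, hcV⟩ := indicator a₀ ha₀Z
  obtain ⟨F, hF, hFev⟩ := (memV d _).1 hcV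
  have hφpow : ∀ z : Fin (n+1) → ℂ, apolar F (linForm z ^ d) = eval z F :=
    fun z => apolar_linForm_pow hF z
  have hTB0 : apolar F T = 0 := by
    have hspan : Submodule.span ℂ ((fun v => linForm v ^ d) '' (B : Set _)) ≤
        LinearMap.ker (apolar F) := by
      rw [Submodule.span_le]
      rintro x ⟨b, hb, rfl⟩
      have hbB : b ∈ B := hb
      have hbZ : b ∈ Z := Finset.mem_union_right _ hbB
      have hba : b ≠ a₀ := fun hh => hAB a₀ ha₀ b hbB 1 (by rw [one_smul]; exact hh)
      simp only [SetLike.mem_coe, LinearMap.mem_ker]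
      rw [hφpow]
      have hv := hFev ⟨b, hbZ⟩
      rw [hv, if_neg hba]
    exact LinearMap.mem_ker.1 (hspan hBnr.1)
  have himage : ((fun v => linForm v ^ d) '' (A : Set (Fin (n+1) → ℂ))) =
      insert (linForm a₀ ^ d)
        ((fun v => linForm v ^ d) '' ((A.erase a₀ : Finset (Fin (n+1) → ℂ)) : Set _)) := by
    conv_lhs => rw [← Finset.insert_erase ha₀]
    rw [Finset.coe_insert, Set.image_insert_eq]
  have hTA := hAnr.1
  rw [Computes, himage] at hTA
  obtain ⟨s, zz, hzz, hTeq⟩ := Submodule.mem_span_insert.1 hTA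
  have hkerA : Submodule.span ℂ
      ((fun v => linForm v ^ d) '' ((A.erase a₀ : Finset (Fin (n+1) → ℂ)) : Set _)) ≤
      LinearMap.ker (apolar F) := by
    rw [Submodule.span_le]
    rintro x ⟨a, ha, rfl⟩
    have hae : a ∈ A.erase a₀ := ha
    obtain ⟨hane, haA⟩ := Finset.mem_erase.1 hae
    simp only [SetLike.mem_coe, LinearMap.mem_ker]
    rw [hφpow]
    have hv := hFev ⟨a, Finset.mem_union_left _ haA⟩
    rw [hv, if_neg hane]
  have hφa₀ : apolar F (linForm a₀ ^ d) = c := by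
    rw [hφpow]
    have hv := hFev ⟨a₀, ha₀Z⟩
    rw [hv, if_pos rfl]
  have hs0 : s = 0 := by
    have h0 := congrArg (apolar F) hTeq
    rw [hTB0, map_add, map_smul, hφa₀, LinearMap.mem_ker.1 (hkerA hzz), add_zero,
      smul_eq_mul] at h0
    rcases mul_eq_zero.1 h0.symm with h | h
    · exact h
    · exact absurd h hc0
  have hcomp : Computes (A.erase a₀) d T := by
    rw [Computes, hTeq, hs0, zero_smul, zero_add]
    exact hzz
  exact hAnr.2 (A.erase a₀) (Finset.erase_ssubset ha₀) hcomp
end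

section
/- Let Z ⊂ ℙⁿ be a finite set of points and let i > 0 be an integer with Dh_Z(i) ≤ i. Then Dh_Z(i+1) ≤ Dh_Z(i); consequently, if Dh_Z(i) = 0 then Dh_Z(j) = 0 for every j ≥ i. -/
open MvPolynomial BigOperators

namespace Stmt13

set_option linter.unusedSectionVars false
set_option maxHeartbeats 1000000
set_option linter.unusedVariables false

open Finset Finsupp


/-- Numeric core lemma for the shadow bound. -/
lemma numeric_core (d : ℕ) : ∀ (a s : ℕ → ℕ), 1 ≤ a 0 → (∀ k, d < k → a k = 0) →
    (∀ k, k ≤ d → min (a k) (d - k) ≤ s k) →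
    min (∑ k ∈ Finset.range (d+1), a k) d ≤
      ∑ k ∈ Finset.range (d+1), max (s k) (a (k+1)) := by
  induction d with
  | zero => intro a s _ _ _; simp
  | succ d ih =>
    intro a s ha0 htop hs
    set A := ∑ k ∈ range (d+1), a (k+1) with hA
    set B := ∑ k ∈ range (d+1), max (s (k+1)) (a (k+1+1)) with hB
    have hsplit : ∑ k ∈ range (d+1+1), max (s k) (a (k+1))
        = B + max (s 0) (a (0+1)) := Finset.sum_range_succ' _ (d+1)
    have hasplit : ∑ k ∈ range (d+1+1), a k = A + a 0 := Finset.sum_range_succ' _ (d+1)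
    rw [hsplit, hasplit]
    rw [show (0:ℕ)+1 = 1 from rfl] at hsplit ⊢
    have hs0 : min (a 0) (d + 1) ≤ s 0 := by
      have := hs 0 (by omega)
      simpa using this
    have hABle (h : A ≤ B) : min (A + a 0) (d+1) ≤ B + max (s 0) (a 1) := by
      rcases le_total (a 0) (d+1) with h0 | h0
      · refine le_trans (min_le_left _ _) ?_
        have : a 0 ≤ s 0 := le_trans (by rw [min_eq_left h0]) hs0
        have : a 0 ≤ max (s 0) (a 1) := le_trans this (le_max_left _ _)
        omega
      · refine le_trans (min_le_right _ _) ?_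
        have : d + 1 ≤ s 0 := le_trans (by rw [min_eq_right h0]) hs0
        have : d + 1 ≤ max (s 0) (a 1) := le_trans this (le_max_left _ _)
        omega
    by_cases ha1 : a 1 = 0
    · -- trivial case: no mass at level 1
      apply hABle
      have h1 : A = (∑ k ∈ range d, a (k+1+1)) + a 1 := Finset.sum_range_succ' _ d
      have h2 : ∑ k ∈ range d, a (k+1+1) ≤ B := by
        calc ∑ k ∈ range d, a (k+1+1) ≤ ∑ k ∈ range (d+1), a (k+1+1) :=
              Finset.sum_le_sum_of_subset (Finset.range_subset_range.2 (by omega))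
          _ ≤ B := Finset.sum_le_sum (fun k _ => le_max_right _ _)
      omega
    · -- shift induction
      have hIH := ih (fun k => a (k+1)) (fun k => s (k+1)) (show 1 ≤ a 1 by omega)
        (fun k hk => htop (k+1) (by omega))
        (fun k hk => by
          have := hs (k+1) (by omega)
          have he : d + 1 - (k+1) = d - k := by omega
          rwa [he] at this)
      rcases le_total A d with h | h
      · exact hABle (le_trans (by rw [min_eq_left h]) hIH)
      · have hdB : d ≤ B := le_trans (by rw [min_eq_right h]) hIH
        refine le_trans (min_le_right _ _) ?_
        have : a 1 ≤ max (s 0) (a 1) := le_max_right _ _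
        omega


section PartB
variable {σ : Type*} [DecidableEq σ]

/-- The lower shadow of a finite set of monomials (exponent vectors). -/
noncomputable def shadow (M : Finset (σ →₀ ℕ)) : Finset (σ →₀ ℕ) :=
  M.biUnion fun f => f.support.image fun x => f - Finsupp.single x 1

lemma mem_shadow {M : Finset (σ →₀ ℕ)} {g : σ →₀ ℕ} :
    g ∈ shadow M ↔ ∃ f ∈ M, ∃ x, f x ≠ 0 ∧ g = f - Finsupp.single x 1 := by
  simp only [shadow, Finset.mem_biUnion, Finset.mem_image, Finsupp.mem_support_iff]
  constructor
  · rintro ⟨f, hf, x, hx, rfl⟩; exact ⟨f, hf, x, hx, rfl⟩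
  · rintro ⟨f, hf, x, hx, rfl⟩; exact ⟨f, hf, x, hx, rfl⟩

lemma sub_single_apply_self (f : σ →₀ ℕ) (x : σ) :
    ((f - Finsupp.single x 1 : σ →₀ ℕ)) x = f x - 1 := by
  rw [Finsupp.tsub_apply, Finsupp.single_eq_same]

lemma sub_single_apply_ne (f : σ →₀ ℕ) {x y : σ} (h : y ≠ x) :
    ((f - Finsupp.single x 1 : σ →₀ ℕ)) y = f y := by
  rw [Finsupp.tsub_apply, Finsupp.single_eq_of_ne' (Ne.symm h), Nat.sub_zero]

lemma sub_single_add_cancel {f : σ →₀ ℕ} {x : σ} (h : f x ≠ 0) :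
    (f - Finsupp.single x 1) + Finsupp.single x 1 = f := by
  ext y
  rcases eq_or_ne y x with rfl | hy
  · rw [Finsupp.add_apply, sub_single_apply_self, Finsupp.single_eq_same]
    omega
  · rw [Finsupp.add_apply, sub_single_apply_ne _ hy, Finsupp.single_eq_of_ne' (Ne.symm hy),
      add_zero]

omit [DecidableEq σ] in
lemma degree_erase_add (x : σ) (f : σ →₀ ℕ) :
    Finsupp.degree (f.erase x) + f x = Finsupp.degree f := by
  conv_rhs => rw [← Finsupp.single_add_erase x f]
  rw [Finsupp.degree_eq_weight_one, map_add]
  have : (Finsupp.weight (fun _ : σ => (1:ℕ))) (Finsupp.single x (f x)) = f x := by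
    simp [Finsupp.weight_apply]
  rw [this, add_comm]

lemma degree_sub_single {f : σ →₀ ℕ} {x : σ} (h : f x ≠ 0) :
    Finsupp.degree (f - Finsupp.single x 1) + 1 = Finsupp.degree f := by
  conv_rhs => rw [← sub_single_add_cancel h]
  rw [Finsupp.degree_eq_weight_one, map_add]
  have : (Finsupp.weight (fun _ : σ => (1:ℕ))) (Finsupp.single x 1) = 1 := by
    simp [Finsupp.weight_apply]
  rw [this]



set_option linter.unusedSectionVars false
set_option maxHeartbeats 1000000

variable {σ' : Type*} [DecidableEq σ']



/-- Key combinatorial lemma (special case of the Macaulay bound). -/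
lemma min_card_le_shadow_card : ∀ (n : ℕ) (S : Finset σ'), S.card ≤ n →
    ∀ (d : ℕ) (M : Finset (σ' →₀ ℕ)), M.Nonempty → (∀ f ∈ M, f.support ⊆ S) →
    (∀ f ∈ M, Finsupp.degree f = d) → min M.card d ≤ (shadow M).card := by
  intro n
  induction n with
  | zero =>
    intro S hS d M hne hsupp hdeg
    rcases Nat.eq_zero_or_pos d with rfl | hd
    · simp
    · exfalso
      obtain ⟨f, hf⟩ := hne
      have hS0 : S = ∅ := Finset.card_eq_zero.1 (le_antisymm hS (Nat.zero_le _))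
      have h1 : f.support = ∅ := Finset.subset_empty.1 (hS0 ▸ hsupp f hf)
      have h2 : f = 0 := Finsupp.support_eq_empty.1 h1
      have h3 := hdeg f hf
      rw [h2, map_zero] at h3
      omega
  | succ n ih =>
    intro S hS d M hne hsupp hdeg
    rcases Nat.eq_zero_or_pos d with rfl | hd
    · simp
    obtain ⟨f₀, hf₀⟩ := hne
    have hsupp₀ : f₀.support.Nonempty := by
      rw [Finset.nonempty_iff_ne_empty]
      intro h
      have h2 : f₀ = 0 := Finsupp.support_eq_empty.1 h
      have h3 := hdeg f₀ hf₀
      rw [h2, map_zero] at h3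
      omega
    obtain ⟨x, hx⟩ := hsupp₀
    have hxS : x ∈ S := hsupp f₀ hf₀ hx
    have hfx_le : ∀ f ∈ M, f x ≤ d := fun f hf => (hdeg f hf) ▸ Finsupp.le_degree x f
    by_cases hall : ∀ f ∈ M, f x ≠ 0
    · -- every monomial is divisible by x : inject M into the shadow
      refine le_trans (min_le_left _ _) (Finset.card_le_card_of_injOn
        (fun f => f - Finsupp.single x 1) ?_ ?_)
      · intro f hf
        exact mem_shadow.2 ⟨f, hf, x, hall f hf, rfl⟩
      · intro f hf g hg hfg
        simp only [Finset.mem_coe] at hf hg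
        have := congrArg (· + Finsupp.single x 1) hfg
        simpa only [sub_single_add_cancel (hall f hf), sub_single_add_cancel (hall g hg)]
          using this
    · push_neg at hall
      obtain ⟨f₁, hf₁, hf₁x⟩ := hall
      -- (F1) : fibers of erase
      have hNk_card : ∀ k : ℕ,
          ((M.filter (fun f => f x = k)).image (Finsupp.erase x)).card
            = (M.filter (fun f => f x = k)).card := by
        intro k
        apply Finset.card_image_of_injOn
        intro f hf g hg hfg
        simp only [Finset.mem_coe, Finset.mem_filter] at hf hg
        rw [← Finsupp.erase_add_single x f, ← Finsupp.erase_add_single x g,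
          hf.2, hg.2, hfg]
      -- (F2) : induction hypothesis per level
      have hF2 : ∀ k, k ≤ d → min (M.filter (fun f => f x = k)).card (d - k)
          ≤ (shadow ((M.filter (fun f => f x = k)).image (Finsupp.erase x))).card := by
        intro k hk
        rcases Finset.eq_empty_or_nonempty (M.filter (fun f => f x = k)) with he | hne'
        · rw [he]
          simp
        · have := ih (S.erase x)
            (by have := Finset.card_erase_of_mem hxS; omega)
            (d - k) ((M.filter (fun f => f x = k)).image (Finsupp.erase x))
            (hne'.image _)
            (by
              rintro g hg
              rw [Finset.mem_image] at hg
              obtain ⟨f, hf, rfl⟩ := hg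
              rw [Finset.mem_filter] at hf
              intro y hy
              rw [Finsupp.support_erase, Finset.mem_erase] at hy
              exact Finset.mem_erase.2 ⟨hy.1, hsupp f hf.1 hy.2⟩)
            (by
              rintro g hg
              rw [Finset.mem_image] at hg
              obtain ⟨f, hf, rfl⟩ := hg
              rw [Finset.mem_filter] at hf
              have h1 := degree_erase_add x f
              have h2 := hdeg f hf.1
              rw [hf.2] at h1
              omega)
          rwa [hNk_card] at this
      -- (F3)
      have hF3 : ∀ k : ℕ, (M.filter (fun f => f x = k+1)).card
          ≤ ((shadow M).filter (fun g => g x = k)).card := by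
        intro k
        apply Finset.card_le_card_of_injOn (fun f => f - Finsupp.single x 1)
        · intro f hf
          rw [Finset.mem_coe, Finset.mem_filter] at hf
          rw [Finset.mem_coe, Finset.mem_filter]
          refine ⟨mem_shadow.2 ⟨f, hf.1, x, by omega, rfl⟩, ?_⟩
          rw [sub_single_apply_self, hf.2]
          omega
        · intro f hf g hg hfg
          simp only [Finset.mem_coe, Finset.mem_filter] at hf hg
          have := congrArg (· + Finsupp.single x 1) hfg
          simpa only [sub_single_add_cancel (show f x ≠ 0 by omega),
            sub_single_add_cancel (show g x ≠ 0 by omega)] using this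
      -- (F4)
      have hF4 : ∀ k : ℕ, (shadow ((M.filter (fun f => f x = k)).image (Finsupp.erase x))).card
          ≤ ((shadow M).filter (fun g => g x = k)).card := by
        intro k
        apply Finset.card_le_card_of_injOn (fun g => g + Finsupp.single x k)
        · intro g hg
          obtain ⟨h, hh, y, hy, rfl⟩ := mem_shadow.1 hg
          rw [Finset.mem_image] at hh
          obtain ⟨f, hf, rfl⟩ := hh
          rw [Finset.mem_filter] at hf
          have hyx : y ≠ x := by
            intro h
            rw [h, Finsupp.erase_same] at hy
            exact hy rfl
          have key : (Finsupp.erase x f - Finsupp.single y 1) + Finsupp.single x k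
              = f - Finsupp.single y 1 := by
            ext z
            rcases eq_or_ne z x with rfl | hz
            · rw [Finsupp.add_apply, sub_single_apply_ne _ (Ne.symm hyx),
                Finsupp.erase_same, Finsupp.single_eq_same,
                sub_single_apply_ne _ (Ne.symm hyx), hf.2, zero_add]
            · rw [Finsupp.add_apply, Finsupp.single_eq_of_ne' (Ne.symm hz), add_zero]
              rcases eq_or_ne z y with rfl | hzy
              · rw [sub_single_apply_self, sub_single_apply_self, Finsupp.erase_ne hz]
              · rw [sub_single_apply_ne _ hzy, sub_single_apply_ne _ hzy,
                  Finsupp.erase_ne hz]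
          rw [Finset.mem_coe, Finset.mem_filter]
          beta_reduce
          rw [key]
          have hfy : f y ≠ 0 := by rwa [Finsupp.erase_ne hyx] at hy
          refine ⟨mem_shadow.2 ⟨f, hf.1, y, hfy, rfl⟩, ?_⟩
          rw [sub_single_apply_ne _ (Ne.symm hyx), hf.2]
        · intro g _ g' _ h
          exact add_right_cancel h
      -- (F5)
      have hF5 : M.card = ∑ k ∈ Finset.range (d+1),
          (M.filter (fun f => f x = k)).card :=
        Finset.card_eq_sum_card_fiberwise (f := fun f => f x) (fun f hf =>
          Finset.mem_range.2 (Nat.lt_succ_of_le (hfx_le f hf)))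
      -- (F6)
      have hF6 : ∑ k ∈ Finset.range (d+1), ((shadow M).filter (fun g => g x = k)).card
          ≤ (shadow M).card := by
        have heq : (shadow M).card = ∑ k ∈ Finset.range (d+1),
            ((shadow M).filter (fun g => g x = k)).card :=
          Finset.card_eq_sum_card_fiberwise (f := fun g : σ' →₀ ℕ => g x) (fun g hg => by
            obtain ⟨f, hf, y, hy, rfl⟩ := mem_shadow.1 hg
            rw [Finset.mem_coe, Finset.mem_range]
            show ((f - Finsupp.single y 1 : σ' →₀ ℕ)) x < d + 1
            have h1 : ((f - Finsupp.single y 1 : σ' →₀ ℕ)) x ≤ f x := by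
              rcases eq_or_ne x y with rfl | hxy
              · rw [sub_single_apply_self]; omega
              · rw [sub_single_apply_ne _ hxy]
            have := hfx_le f hf
            omega)
        exact le_of_eq heq.symm
      have ha0 : 1 ≤ (M.filter (fun f => f x = 0)).card :=
        Finset.card_pos.2 ⟨f₁, Finset.mem_filter.2 ⟨hf₁, hf₁x⟩⟩
      have htop : ∀ k, d < k → (M.filter (fun f => f x = k)).card = 0 := by
        intro k hk
        apply Finset.card_eq_zero.2
        apply Finset.filter_eq_empty_iff.2
        intro f hf h
        have := hfx_le f hf
        omega
      calc min M.card d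
          = min (∑ k ∈ Finset.range (d+1), (M.filter (fun f => f x = k)).card) d := by rw [hF5]
        _ ≤ ∑ k ∈ Finset.range (d+1),
              max ((shadow ((M.filter (fun f => f x = k)).image (Finsupp.erase x))).card)
                ((M.filter (fun f => f x = k+1)).card) :=
            numeric_core d _ _ ha0 htop hF2
        _ ≤ ∑ k ∈ Finset.range (d+1), ((shadow M).filter (fun g => g x = k)).card :=
            Finset.sum_le_sum (fun k _ => max_le (hF4 k) (hF3 k))
        _ ≤ (shadow M).card := hF6


end PartB

section PartC
open MvPolynomial
variable {σ : Type*} [LinearOrder σ]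

/-- The leading monomial exponent of a polynomial, in the lexicographic order
(as an element of the `Lex` synonym); junk value `0` for the zero polynomial. -/
noncomputable def lmo (F : MvPolynomial σ ℂ) : Lex (σ →₀ ℕ) :=
  if h : F.support.Nonempty then (F.support.image toLex).max' (h.image _) else 0

/-- The leading monomial of a polynomial. -/
noncomputable def lm (F : MvPolynomial σ ℂ) : σ →₀ ℕ := ofLex (lmo F)

lemma lm_mem_support {F : MvPolynomial σ ℂ} (hF : F ≠ 0) : lm F ∈ F.support := by
  have h : F.support.Nonempty := Finsupp.support_nonempty_iff.2 (by simpa using hF)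
  have : (F.support.image toLex).max' (h.image _) ∈ F.support.image toLex :=
    Finset.max'_mem _ _
  rw [Finset.mem_image] at this
  obtain ⟨μ, hμ, hμ2⟩ := this
  have : lm F = μ := by rw [lm, lmo, dif_pos h, ← hμ2]; rfl
  rwa [this]

lemma coeff_lm_ne_zero {F : MvPolynomial σ ℂ} (hF : F ≠ 0) : coeff (lm F) F ≠ 0 := by
  have := lm_mem_support hF
  rwa [MvPolynomial.mem_support_iff] at this

lemma le_lmo {F : MvPolynomial σ ℂ} {μ : σ →₀ ℕ} (hμ : μ ∈ F.support) :
    toLex μ ≤ lmo F := by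
  have h : F.support.Nonempty := ⟨μ, hμ⟩
  rw [lmo, dif_pos h]
  exact Finset.le_max' _ _ (Finset.mem_image_of_mem _ hμ)

lemma lmo_eq_of {F : MvPolynomial σ ℂ} {ν : σ →₀ ℕ} (hmem : ν ∈ F.support)
    (hub : ∀ μ ∈ F.support, toLex μ ≤ toLex ν) : lmo F = toLex ν := by
  apply le_antisymm _ (le_lmo hmem)
  have h : F.support.Nonempty := ⟨ν, hmem⟩
  rw [lmo, dif_pos h]
  apply Finset.max'_le
  intro y hy
  rw [Finset.mem_image] at hy
  obtain ⟨μ, hμ, rfl⟩ := hy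
  exact hub μ hμ

lemma lm_eq_of {F : MvPolynomial σ ℂ} {ν : σ →₀ ℕ} (hmem : ν ∈ F.support)
    (hub : ∀ μ ∈ F.support, toLex μ ≤ toLex ν) : lm F = ν := by
  rw [lm, lmo_eq_of hmem hub]; rfl

lemma lm_monomial {μ : σ →₀ ℕ} {c : ℂ} (hc : c ≠ 0) :
    lm (monomial μ c) = μ := by
  apply lm_eq_of
  · rw [MvPolynomial.support_monomial, if_neg hc]; exact Finset.mem_singleton_self μ
  · intro ν hν
    rw [MvPolynomial.support_monomial, if_neg hc, Finset.mem_singleton] at hν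
    rw [hν]

lemma lm_X_mul {F : MvPolynomial σ ℂ} (hF : F ≠ 0) (x : σ) :
    lm (X x * F) = Finsupp.single x 1 + lm F := by
  apply lm_eq_of
  · rw [MvPolynomial.support_X_mul, Finset.mem_map]
    exact ⟨lm F, lm_mem_support hF, rfl⟩
  · intro ν hν
    rw [MvPolynomial.support_X_mul, Finset.mem_map] at hν
    obtain ⟨μ, hμ, rfl⟩ := hν
    have h1 : toLex μ ≤ toLex (lm F) := by
      have := le_lmo hμ; rwa [lm, toLex_ofLex]
    have : (toLex (Finsupp.single x 1 + μ) : Lex (σ →₀ ℕ))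
        = toLex (Finsupp.single x 1) + toLex μ := rfl
    rw [addLeftEmbedding_apply, this]
    have : (toLex (Finsupp.single x 1 + lm F) : Lex (σ →₀ ℕ))
        = toLex (Finsupp.single x 1) + toLex (lm F) := rfl
    rw [this]
    exact add_le_add_right h1 _

lemma lm_smul {F : MvPolynomial σ ℂ} {c : ℂ} (hc : c ≠ 0) : lm (c • F) = lm F := by
  rcases eq_or_ne F 0 with rfl | hF
  · rw [smul_zero]
  · apply lm_eq_of
    · rw [MvPolynomial.support_smul_eq hc]; exact lm_mem_support hF
    · intro μ hμ
      rw [MvPolynomial.support_smul_eq hc] at hμ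
      have := le_lmo hμ; rwa [lm, toLex_ofLex]

open Classical in
/-- The set of leading monomials of the nonzero elements of `W`, within the monomial
universe `T`. -/
noncomputable def lmSet (W : Submodule ℂ (MvPolynomial σ ℂ)) (T : Finset (σ →₀ ℕ)) :
    Finset (σ →₀ ℕ) :=
  T.filter (fun μ => ∃ F ∈ W, F ≠ 0 ∧ lm F = μ)

lemma mem_lmSet_iff {W : Submodule ℂ (MvPolynomial σ ℂ)} {T : Finset (σ →₀ ℕ)}
    (hWT : ∀ F ∈ W, F ≠ 0 → lm F ∈ T) {μ : σ →₀ ℕ} :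
    μ ∈ lmSet W T ↔ ∃ F ∈ W, F ≠ 0 ∧ lm F = μ := by
  classical
  rw [lmSet]
  constructor
  · intro h
    exact (Finset.mem_filter.1 h).2
  · intro h
    obtain ⟨F, hFW, hF0, rfl⟩ := h
    exact Finset.mem_filter.2 ⟨hWT F hFW hF0, F, hFW, hF0, rfl⟩

/-- Choice of witnesses for the leading monomials. -/
lemma exists_witness {W : Submodule ℂ (MvPolynomial σ ℂ)} {T : Finset (σ →₀ ℕ)}
    (hWT : ∀ F ∈ W, F ≠ 0 → lm F ∈ T) :
    ∃ b : {μ // μ ∈ lmSet W T} → MvPolynomial σ ℂ,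
      ∀ μ, b μ ∈ W ∧ b μ ≠ 0 ∧ lm (b μ) = μ.1 := by
  have h : ∀ μ : {μ // μ ∈ lmSet W T}, ∃ F, F ∈ W ∧ F ≠ 0 ∧ lm F = μ.1 := by
    intro μ
    have := (mem_lmSet_iff hWT).1 μ.2
    obtain ⟨F, h1, h2, h3⟩ := this
    exact ⟨F, h1, h2, h3⟩
  exact ⟨fun μ => Classical.choose (h μ), fun μ => Classical.choose_spec (h μ)⟩

theorem span_witness {W : Submodule ℂ (MvPolynomial σ ℂ)} {T : Finset (σ →₀ ℕ)}
    (hWT : ∀ F ∈ W, F ≠ 0 → lm F ∈ T)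
    (b : {μ // μ ∈ lmSet W T} → MvPolynomial σ ℂ)
    (hb : ∀ μ, b μ ∈ W ∧ b μ ≠ 0 ∧ lm (b μ) = μ.1) :
    W = Submodule.span ℂ (Set.range b) := by
  apply le_antisymm
  · -- spanning, by strong induction on the number of monomials of T below lm F
    intro F hFW
    have main : ∀ n : ℕ, ∀ F, F ∈ W →
        (T.filter (fun ν => toLex ν ≤ lmo F)).card ≤ n →
        F ∈ Submodule.span ℂ (Set.range b) := by
      intro n
      induction n with
      | zero =>
        intro F hF hcard
        rcases eq_or_ne F 0 with rfl | hF0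
        · exact Submodule.zero_mem _
        · exfalso
          have hmem : lm F ∈ T.filter (fun ν => toLex ν ≤ lmo F) := by
            refine Finset.mem_filter.2 ⟨hWT F hF hF0, ?_⟩
            rw [lm, toLex_ofLex]
          have := Finset.card_pos.2 ⟨lm F, hmem⟩
          omega
      | succ n ih =>
        intro F hF hcard
        rcases eq_or_ne F 0 with rfl | hF0
        · exact Submodule.zero_mem _
        have hμT : lm F ∈ lmSet W T := (mem_lmSet_iff hWT).2 ⟨F, hF, hF0, rfl⟩
        set μ : {μ // μ ∈ lmSet W T} := ⟨lm F, hμT⟩ with hμdef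
        obtain ⟨hbW, hb0, hblm0⟩ := hb μ
        have hblm : lm (b μ) = lm F := hblm0
        set c : ℂ := coeff (lm F) F / coeff (lm F) (b μ) with hc
        have hcne : coeff (lm F) (b μ) ≠ 0 := by
          have := coeff_lm_ne_zero hb0
          rwa [hblm] at this
        have hFc : coeff (lm F) F - c * coeff (lm F) (b μ) = 0 := by
          rw [hc, div_mul_cancel₀ _ hcne, sub_self]
        set F' : MvPolynomial σ ℂ := F - c • b μ with hF'
        have hF'W : F' ∈ W := Submodule.sub_mem _ hF (Submodule.smul_mem _ _ hbW)
        have hspan : b μ ∈ Submodule.span ℂ (Set.range b) :=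
          Submodule.subset_span ⟨μ, rfl⟩
        rcases eq_or_ne F' 0 with h0 | hF'0
        · have : F = c • b μ := by
            rw [hF'] at h0
            linear_combination (norm := module) h0
          rw [this]
          exact Submodule.smul_mem _ _ hspan
        · -- lm F' < lm F
          have hsub : F'.support ⊆ (F.support ∪ (c • b μ).support) := by
            intro ν hν
            by_contra h
            rw [Finset.mem_union] at h
            push_neg at h
            rw [MvPolynomial.mem_support_iff] at hν
            apply hν
            rw [hF', MvPolynomial.coeff_sub]
            rw [MvPolynomial.notMem_support_iff.1 h.1, MvPolynomial.notMem_support_iff.1 h.2]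
            ring
          have hlt : lmo F' < lmo F := by
            have hle : lmo F' ≤ lmo F := by
              have hmem := lm_mem_support hF'0
              have := le_lmo hmem
              rw [lm, toLex_ofLex] at this
              -- every element of supp F' is ≤ lmo F
              have hub : ∀ ν ∈ F'.support, toLex ν ≤ lmo F := by
                intro ν hν
                rcases Finset.mem_union.1 (hsub hν) with h | h
                · exact le_lmo h
                · have hsupp : (c • b μ).support ⊆ (b μ).support :=
                    Finsupp.support_smul
                  have h2 := le_lmo (hsupp h)
                  have h3 : lmo (b μ) = toLex (lm F) := by
                    rw [← hblm, lm, toLex_ofLex]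
                  rw [h3] at h2
                  calc toLex ν ≤ toLex (lm F) := h2
                    _ = lmo F := by rw [lm, toLex_ofLex]
              calc lmo F' = toLex (lm F') := by rw [lm, toLex_ofLex]
                _ ≤ lmo F := hub _ (lm_mem_support hF'0)
            rcases lt_or_eq_of_le hle with h | h
            · exact h
            · exfalso
              have : lm F' = lm F := by
                rw [lm, lm, h]
              have hmem := lm_mem_support hF'0
              rw [this, MvPolynomial.mem_support_iff] at hmem
              apply hmem
              rw [hF', MvPolynomial.coeff_sub, MvPolynomial.coeff_smul]
              simpa using hFc
          have hsubset : T.filter (fun ν => toLex ν ≤ lmo F')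
              ⊆ (T.filter (fun ν => toLex ν ≤ lmo F)).erase (lm F) := by
            intro ν hν
            rw [Finset.mem_filter] at hν
            refine Finset.mem_erase.2 ⟨?_, Finset.mem_filter.2 ⟨hν.1, le_trans hν.2 (le_of_lt hlt)⟩⟩
            intro h
            rw [h] at hν
            have : lmo F ≤ lmo F' := by
              have := hν.2
              rwa [lm, toLex_ofLex] at this
            exact absurd (lt_of_le_of_lt this hlt) (lt_irrefl _)
          have hcard' : (T.filter (fun ν => toLex ν ≤ lmo F')).card ≤ n := by
            have h1 := Finset.card_le_card hsubset
            have h2 : ((T.filter (fun ν => toLex ν ≤ lmo F)).erase (lm F)).card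
                = (T.filter (fun ν => toLex ν ≤ lmo F)).card - 1 := by
              apply Finset.card_erase_of_mem
              refine Finset.mem_filter.2 ⟨hWT F hF hF0, ?_⟩
              rw [lm, toLex_ofLex]
            have h3 : 0 < (T.filter (fun ν => toLex ν ≤ lmo F)).card := by
              apply Finset.card_pos.2
              refine ⟨lm F, Finset.mem_filter.2 ⟨hWT F hF hF0, ?_⟩⟩
              rw [lm, toLex_ofLex]
            omega
          have hF'span := ih F' hF'W hcard'
          have : F = F' + c • b μ := by rw [hF']; ring
          rw [this]
          exact Submodule.add_mem _ hF'span (Submodule.smul_mem _ _ hspan)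
    exact main _ F hFW le_rfl
  · rw [Submodule.span_le]
    rintro x ⟨μ, rfl⟩
    exact (hb μ).1

theorem linearIndependent_witness {W : Submodule ℂ (MvPolynomial σ ℂ)} {T : Finset (σ →₀ ℕ)}
    (b : {μ // μ ∈ lmSet W T} → MvPolynomial σ ℂ)
    (hb : ∀ μ, b μ ∈ W ∧ b μ ≠ 0 ∧ lm (b μ) = μ.1) :
    LinearIndependent ℂ b := by
  rw [linearIndependent_iff']
  intro s g hsum
  by_contra hcon
  push_neg at hcon
  obtain ⟨i₀, hi₀s, hi₀⟩ := hcon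
  have hs0 : (s.filter (fun i => g i ≠ 0)).Nonempty := ⟨i₀, Finset.mem_filter.2 ⟨hi₀s, hi₀⟩⟩
  obtain ⟨i', hi's, hi'max⟩ := Finset.exists_max_image (s.filter (fun i => g i ≠ 0))
    (fun i => toLex i.1) hs0
  rw [Finset.mem_filter] at hi's
  have hlmo : ∀ i : {μ // μ ∈ lmSet W T}, lmo (b i) = toLex i.1 := by
    intro i
    rw [← (hb i).2.2, lm, toLex_ofLex]
  -- take coefficient of i'.1 in the sum
  have hcoeff := congrArg (coeff i'.1) hsum
  rw [MvPolynomial.coeff_sum, Finset.sum_eq_single i'] at hcoeff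
  · rw [MvPolynomial.coeff_smul, MvPolynomial.coeff_zero, smul_eq_mul] at hcoeff
    have hbne : coeff i'.1 (b i') ≠ 0 := by
      have h := coeff_lm_ne_zero (hb i').2.1
      rwa [(hb i').2.2] at h
    rcases mul_eq_zero.1 hcoeff with h | h
    · exact hi's.2 (by simpa using h)
    · exact hbne h
  · intro i his hne
    rw [MvPolynomial.coeff_smul]
    rcases eq_or_ne (g i) 0 with h0 | h0
    · rw [h0]; simp
    · have hi : i ∈ s.filter (fun i => g i ≠ 0) := Finset.mem_filter.2 ⟨his, h0⟩
      have hle := hi'max i hi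
      have hlt : toLex i.1 < toLex i'.1 := by
        rcases lt_or_eq_of_le hle with h | h
        · exact h
        · exact absurd (Subtype.ext (toLex.injective h)) hne
      have hz : coeff i'.1 (b i) = 0 := by
        by_contra hz
        have hmem : i'.1 ∈ (b i).support := MvPolynomial.mem_support_iff.2 hz
        have := le_lmo hmem
        rw [hlmo i] at this
        exact absurd (lt_of_le_of_lt this hlt) (lt_irrefl _)
      rw [hz, smul_zero]
  · intro h
    exact absurd hi's.1 h

/-- The dimension of a space of polynomials equals the number of leading monomials. -/
theorem finrank_eq_card_lmSet {W : Submodule ℂ (MvPolynomial σ ℂ)} {T : Finset (σ →₀ ℕ)}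
    (hWT : ∀ F ∈ W, F ≠ 0 → lm F ∈ T) :
    Module.finrank ℂ W = (lmSet W T).card := by
  obtain ⟨b, hb⟩ := exists_witness hWT
  have hspan := span_witness hWT b hb
  have hli := linearIndependent_witness b hb
  have h1 : Module.finrank ℂ ↥W = Fintype.card {μ // μ ∈ lmSet W T} := by
    conv_lhs => rw [hspan]
    exact finrank_span_eq_card hli
  rw [h1, Fintype.card_coe]

theorem finiteDimensional_of_lmSet {W : Submodule ℂ (MvPolynomial σ ℂ)} {T : Finset (σ →₀ ℕ)}
    (hWT : ∀ F ∈ W, F ≠ 0 → lm F ∈ T) :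
    FiniteDimensional ℂ W := by
  obtain ⟨b, hb⟩ := exists_witness hWT
  rw [span_witness hWT b hb]
  exact FiniteDimensional.span_of_finite ℂ (Set.finite_range b)


end PartC

section PartD
open MvPolynomial BigOperators
lemma eval_linForm {N : ℕ} (a v : Fin N → ℂ) :
    eval v (linForm a) = ∑ i, a i * v i := by
  simp [linForm]

/-- Existence of a linear form which is nonzero at each of finitely many nonzero vectors. -/
lemma exists_good_linear {N : ℕ} (Z : Finset (Fin N → ℂ)) (hZ : ∀ v ∈ Z, v ≠ 0) :
    ∃ a : Fin N → ℂ, ∀ v ∈ Z, (∑ i, a i * v i) ≠ 0 := by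
  classical
  induction Z using Finset.induction with
  | empty => exact ⟨0, by simp⟩
  | @insert w s hw ih =>
    obtain ⟨a, ha⟩ := ih (fun v hv => hZ v (Finset.mem_insert_of_mem hv))
    have hw0 : w ≠ 0 := hZ w (Finset.mem_insert_self w s)
    obtain ⟨i₀, hi₀⟩ : ∃ i, w i ≠ 0 := by
      by_contra h
      push_neg at h
      exact hw0 (funext h)
    set bad : Finset ℂ := (insert w s).image
      (fun v => -(∑ i, a i * v i) / (v i₀)) with hbad
    obtain ⟨t, ht⟩ := Infinite.exists_notMem_finset bad
    refine ⟨fun i => a i + t * (if i = i₀ then 1 else 0), ?_⟩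
    intro v hv
    have hsum : ∑ i, (a i + t * (if i = i₀ then 1 else 0)) * v i
        = (∑ i, a i * v i) + t * v i₀ := by
      have h1 : ∀ i : Fin N, (a i + t * (if i = i₀ then 1 else 0)) * v i
          = a i * v i + t * ((if i = i₀ then 1 else 0) * v i) := by
        intro i; ring
      rw [Finset.sum_congr rfl (fun i _ => h1 i), Finset.sum_add_distrib]
      congr 1
      rw [← Finset.mul_sum]
      congr 1
      rw [Finset.sum_eq_single i₀]
      · simp
      · intro b _ hb; simp [hb]
      · intro h; exact absurd (Finset.mem_univ i₀) h
    rw [hsum]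
    rcases eq_or_ne (v i₀) 0 with h0 | h0
    · rw [h0, mul_zero, add_zero]
      rcases Finset.mem_insert.1 hv with rfl | hvs
      · exact absurd h0 hi₀
      · exact ha v hvs
    · intro hcon
      apply ht
      rw [hbad, Finset.mem_image]
      refine ⟨v, hv, ?_⟩
      field_simp
      linear_combination -hcon

/-- Abbreviation for the degree-`j` homogeneous component. -/
noncomputable abbrev Vh (N : ℕ) (j : ℕ) : Submodule ℂ (MvPolynomial (Fin N) ℂ) :=
  homogeneousSubmodule (Fin N) ℂ j

/-- The degree-`j` graded piece of the vanishing ideal of `Z`. -/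
noncomputable def Kh (Z : Finset (Fin N → ℂ)) (j : ℕ) : Submodule ℂ (MvPolynomial (Fin N) ℂ) :=
  Submodule.map (Vh N j).subtype (LinearMap.ker (evalMap Z j))

/-- `K_{j+1} + ℓ·R_j`. -/
noncomputable def Nh (Z : Finset (Fin N → ℂ)) (ℓ : MvPolynomial (Fin N) ℂ) (j : ℕ) :
    Submodule ℂ (MvPolynomial (Fin N) ℂ) :=
  Kh Z (j+1) ⊔ Submodule.map (LinearMap.mulLeft ℂ ℓ) (Vh N j)

/-- The finset of monomials of degree `j`. -/
noncomputable def Tm (N : ℕ) (j : ℕ) : Finset (Fin N →₀ ℕ) :=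
  Finset.finsuppAntidiag Finset.univ j

lemma mem_Tm_iff {j : ℕ} {μ : Fin N →₀ ℕ} : μ ∈ Tm N j ↔ Finsupp.degree μ = j := by
  rw [Tm, Finset.mem_finsuppAntidiag]
  constructor
  · rintro ⟨h, -⟩
    rw [← h, Finsupp.degree_apply, Finset.sum_subset (Finset.subset_univ μ.support)]
    intro x _ hx
    rwa [Finsupp.notMem_support_iff] at hx
  · intro h
    refine ⟨?_, Finset.subset_univ _⟩
    rw [← h, Finsupp.degree_apply, Finset.sum_subset (Finset.subset_univ μ.support)]
    intro x _ hx
    rwa [Finsupp.notMem_support_iff] at hx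

lemma aeval_eq_eval (v : Fin N → ℂ) (F : MvPolynomial (Fin N) ℂ) :
    aeval v F = eval v F := by
  rw [aeval_def, Algebra.algebraMap_self]
  rfl

lemma mem_Kh_iff {Z : Finset (Fin N → ℂ)} {j : ℕ} {F : MvPolynomial (Fin N) ℂ} :
    F ∈ Kh Z j ↔ F ∈ Vh N j ∧ ∀ v ∈ Z, eval v F = 0 := by
  rw [Kh, Submodule.mem_map]
  constructor
  · rintro ⟨⟨G, hG⟩, hker, rfl⟩
    refine ⟨hG, ?_⟩
    intro v hv
    rw [LinearMap.mem_ker] at hker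
    have := congrFun hker ⟨v, hv⟩
    simpa [evalMap, aeval_eq_eval] using this
  · rintro ⟨hF, hvan⟩
    refine ⟨⟨F, hF⟩, ?_, rfl⟩
    rw [LinearMap.mem_ker]
    funext v
    simpa [evalMap, aeval_eq_eval] using hvan v.1 v.2

lemma lm_mem_Tm {j : ℕ} {F : MvPolynomial (Fin N) ℂ} (hF : F ∈ Vh N j) (h0 : F ≠ 0) :
    lm F ∈ Tm N j := by
  rw [mem_Tm_iff]
  have hsupp := lm_mem_support h0
  rw [mem_homogeneousSubmodule] at hF
  have := hF (MvPolynomial.mem_support_iff.1 hsupp)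
  rw [Finsupp.degree_eq_weight_one]; exact this

lemma hV_T {j : ℕ} : ∀ F ∈ Vh N j, F ≠ 0 → lm F ∈ Tm N j :=
  fun _ hF h0 => lm_mem_Tm hF h0

section WithEll

variable {Z : Finset (Fin N → ℂ)} {ℓ : MvPolynomial (Fin N) ℂ}

lemma Kh_le {j : ℕ} : Kh Z j ≤ Vh N j := fun _ hF => (mem_Kh_iff.1 hF).1

lemma X_mul_mem_Vh {j : ℕ} {x : Fin N} {G : MvPolynomial (Fin N) ℂ} (hG : G ∈ Vh N j) :
    X x * G ∈ Vh N (j+1) := by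
  rw [mem_homogeneousSubmodule] at hG ⊢
  have h := (isHomogeneous_X ℂ x).mul hG
  have he : 1 + j = j + 1 := Nat.add_comm 1 j
  rwa [he] at h

lemma mul_mem_Vh (hℓV : ℓ ∈ Vh N 1) {j : ℕ} {G : MvPolynomial (Fin N) ℂ} (hG : G ∈ Vh N j) :
    ℓ * G ∈ Vh N (j+1) := by
  rw [mem_homogeneousSubmodule] at hG hℓV ⊢
  have h := hℓV.mul hG
  have he : 1 + j = j + 1 := Nat.add_comm 1 j
  rwa [he] at h

lemma map_mul_le (hℓV : ℓ ∈ Vh N 1) {j : ℕ} :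
    Submodule.map (LinearMap.mulLeft ℂ ℓ) (Vh N j) ≤ Vh N (j+1) := by
  rintro _ ⟨G, hG, rfl⟩
  rw [LinearMap.mulLeft_apply]
  exact mul_mem_Vh hℓV hG

lemma Nh_le (hℓV : ℓ ∈ Vh N 1) {j : ℕ} : Nh Z ℓ j ≤ Vh N (j+1) :=
  sup_le Kh_le (map_mul_le hℓV)

lemma hN_T (hℓV : ℓ ∈ Vh N 1) {j : ℕ} : ∀ F ∈ Nh Z ℓ j, F ≠ 0 → lm F ∈ Tm N (j+1) :=
  fun F hF h0 => lm_mem_Tm (Nh_le hℓV hF) h0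

lemma X_mul_mem_Kh {j : ℕ} {x : Fin N} {F : MvPolynomial (Fin N) ℂ}
    (hF : F ∈ Kh Z j) : X x * F ∈ Kh Z (j+1) := by
  rw [mem_Kh_iff] at hF ⊢
  refine ⟨X_mul_mem_Vh hF.1, ?_⟩
  intro v hv
  rw [map_mul, hF.2 v hv, mul_zero]

/-- Multiplication by a variable maps `Nh j` into `Nh (j+1)`. -/
lemma X_mul_mem_Nh {j : ℕ} {x : Fin N} {F : MvPolynomial (Fin N) ℂ}
    (hF : F ∈ Nh Z ℓ j) : X x * F ∈ Nh Z ℓ (j+1) := by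
  rw [Nh, Submodule.mem_sup] at hF
  obtain ⟨k, hk, m, hm, rfl⟩ := hF
  obtain ⟨G, hG, rfl⟩ := Submodule.mem_map.1 hm
  rw [LinearMap.mulLeft_apply, mul_add]
  rw [Nh, Submodule.mem_sup]
  refine ⟨X x * k, X_mul_mem_Kh hk, X x * (ℓ * G), ?_, rfl⟩
  rw [Submodule.mem_map]
  refine ⟨X x * G, X_mul_mem_Vh hG, ?_⟩
  rw [LinearMap.mulLeft_apply]
  ring

lemma lmSet_mono {W₁ W₂ : Submodule ℂ (MvPolynomial (Fin N) ℂ)} (h : W₁ ≤ W₂)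
    (T : Finset (Fin N →₀ ℕ)) : lmSet W₁ T ⊆ lmSet W₂ T := by
  classical
  intro μ hμ
  rw [lmSet, Finset.mem_filter] at hμ ⊢
  obtain ⟨hT, F, hF, h0, rfl⟩ := hμ
  exact ⟨hT, F, h hF, h0, rfl⟩

/-- The Hilbert function, as a natural number. -/
noncomputable def hfun (Z : Finset (Fin N → ℂ)) (j : ℕ) : ℕ :=
  Module.finrank ℂ (LinearMap.range (evalMap Z j))

/-- The monomial complement whose cardinality is `Dh(j+1)`. -/
noncomputable def msetD (Z : Finset (Fin N → ℂ)) (ℓ : MvPolynomial (Fin N) ℂ) (j : ℕ) :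
    Finset (Fin N →₀ ℕ) :=
  lmSet (Vh N (j+1)) (Tm N (j+1)) \ lmSet (Nh Z ℓ j) (Tm N (j+1))

lemma FD_Vh {j : ℕ} : FiniteDimensional ℂ (Vh N j) :=
  finiteDimensional_of_lmSet hV_T

lemma FD_of_le {W : Submodule ℂ (MvPolynomial (Fin N) ℂ)} {j : ℕ} (h : W ≤ Vh N j) :
    FiniteDimensional ℂ W := by
  haveI := (FD_Vh (N := N) (j := j))
  exact Submodule.finiteDimensional_of_le h

lemma dim_V_eq {Z : Finset (Fin N → ℂ)} (j : ℕ) :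
    Module.finrank ℂ (Vh N j) = hfun Z j + Module.finrank ℂ (Kh Z j) := by
  haveI := (FD_Vh (N := N) (j := j))
  have h1 := LinearMap.finrank_range_add_finrank_ker (evalMap Z j)
  have h2 : Module.finrank ℂ (Kh Z j)
      = Module.finrank ℂ (LinearMap.ker (evalMap Z j)) := by
    rw [Kh]
    exact (LinearEquiv.finrank_eq
      (Submodule.equivMapOfInjective _ (Submodule.injective_subtype _) _)).symm
  rw [hfun, ← h1, h2]

lemma inf_eq {Z : Finset (Fin N → ℂ)} {ℓ : MvPolynomial (Fin N) ℂ}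
    (hℓV : ℓ ∈ Vh N 1) (hℓeval : ∀ v ∈ Z, eval v ℓ ≠ 0) (j : ℕ) :
    Kh Z (j+1) ⊓ Submodule.map (LinearMap.mulLeft ℂ ℓ) (Vh N j)
      = Submodule.map (LinearMap.mulLeft ℂ ℓ) (Kh Z j) := by
  apply le_antisymm
  · intro F hF
    obtain ⟨hFK, hFm⟩ := Submodule.mem_inf.1 hF
    obtain ⟨G, hG, rfl⟩ := Submodule.mem_map.1 hFm
    rw [LinearMap.mulLeft_apply] at hFK
    refine Submodule.mem_map.2 ⟨G, ?_, rfl⟩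
    rw [mem_Kh_iff] at hFK ⊢
    refine ⟨hG, ?_⟩
    intro v hv
    have := hFK.2 v hv
    rw [map_mul] at this
    rcases mul_eq_zero.1 this with h | h
    · exact absurd h (hℓeval v hv)
    · exact h
  · intro F hF
    obtain ⟨G, hG, rfl⟩ := Submodule.mem_map.1 hF
    rw [mem_Kh_iff] at hG
    rw [Submodule.mem_inf]
    constructor
    · rw [LinearMap.mulLeft_apply, mem_Kh_iff]
      refine ⟨mul_mem_Vh hℓV hG.1, ?_⟩
      intro v hv
      rw [map_mul, hG.2 v hv, mul_zero]
    · exact Submodule.mem_map.2 ⟨G, hG.1, rfl⟩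

lemma dim_map_mul {ℓ : MvPolynomial (Fin N) ℂ} (hℓ0 : ℓ ≠ 0)
    (W : Submodule ℂ (MvPolynomial (Fin N) ℂ)) :
    Module.finrank ℂ (Submodule.map (LinearMap.mulLeft ℂ ℓ) W) = Module.finrank ℂ W := by
  refine (LinearEquiv.finrank_eq (Submodule.equivMapOfInjective _ ?_ W)).symm
  intro x y hxy
  rw [LinearMap.mulLeft_apply, LinearMap.mulLeft_apply] at hxy
  exact mul_left_cancel₀ hℓ0 hxy

lemma dim_N_eq {Z : Finset (Fin N → ℂ)} {ℓ : MvPolynomial (Fin N) ℂ}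
    (hℓV : ℓ ∈ Vh N 1) (hℓ0 : ℓ ≠ 0) (hℓeval : ∀ v ∈ Z, eval v ℓ ≠ 0) (j : ℕ) :
    Module.finrank ℂ (Nh Z ℓ j) + Module.finrank ℂ (Kh Z j)
      = Module.finrank ℂ (Kh Z (j+1)) + Module.finrank ℂ (Vh N j) := by
  haveI : FiniteDimensional ℂ (Kh Z (j+1)) := FD_of_le (Kh_le)
  haveI : FiniteDimensional ℂ (Submodule.map (LinearMap.mulLeft ℂ ℓ) (Vh N j)) :=
    FD_of_le (map_mul_le hℓV)
  have h1 := Submodule.finrank_sup_add_finrank_inf_eq (Kh Z (j+1))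
    (Submodule.map (LinearMap.mulLeft ℂ ℓ) (Vh N j))
  rw [inf_eq hℓV hℓeval j, dim_map_mul hℓ0, dim_map_mul hℓ0] at h1
  rw [Nh]
  omega

lemma dim_V_card {j : ℕ} :
    Module.finrank ℂ (Vh N j) = (lmSet (Vh N j) (Tm N j)).card :=
  finrank_eq_card_lmSet hV_T

lemma dim_N_card {Z : Finset (Fin N → ℂ)} {ℓ : MvPolynomial (Fin N) ℂ}
    (hℓV : ℓ ∈ Vh N 1) {j : ℕ} :
    Module.finrank ℂ (Nh Z ℓ j) = (lmSet (Nh Z ℓ j) (Tm N (j+1))).card :=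
  finrank_eq_card_lmSet (hN_T hℓV)

lemma msetD_card {Z : Finset (Fin N → ℂ)} {ℓ : MvPolynomial (Fin N) ℂ}
    (hℓV : ℓ ∈ Vh N 1) (j : ℕ) :
    (msetD Z ℓ j).card + Module.finrank ℂ (Nh Z ℓ j)
      = Module.finrank ℂ (Vh N (j+1)) := by
  rw [msetD, dim_N_card hℓV, dim_V_card]
  exact Finset.card_sdiff_add_card_eq_card (lmSet_mono (Nh_le hℓV) _)

/-- Key counting identity : `|msetD j| = h(j+1) - h(j)`. -/
lemma msetD_card_eq {Z : Finset (Fin N → ℂ)} {ℓ : MvPolynomial (Fin N) ℂ}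
    (hℓV : ℓ ∈ Vh N 1) (hℓ0 : ℓ ≠ 0) (hℓeval : ∀ v ∈ Z, eval v ℓ ≠ 0) (j : ℕ) :
    (msetD Z ℓ j).card + hfun Z j = hfun Z (j+1) := by
  have h1 := msetD_card (Z := Z) hℓV j
  have h2 := dim_N_eq hℓV hℓ0 hℓeval j
  have h3 := dim_V_eq (Z := Z) j
  have h4 := dim_V_eq (Z := Z) (j+1)
  omega

lemma msetD_degree {Z : Finset (Fin N → ℂ)} {ℓ : MvPolynomial (Fin N) ℂ} {j : ℕ}
    {μ : Fin N →₀ ℕ} (hμ : μ ∈ msetD Z ℓ j) : Finsupp.degree μ = j + 1 := by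
  classical
  have h1 := (Finset.mem_sdiff.1 hμ).1
  rw [lmSet] at h1
  exact mem_Tm_iff.1 (Finset.mem_of_mem_filter _ h1)

lemma monomial_mem_Vh {j : ℕ} {μ : Fin N →₀ ℕ} (h : Finsupp.degree μ = j) :
    (monomial μ (1:ℂ)) ∈ Vh N j := by
  rw [mem_homogeneousSubmodule]
  exact isHomogeneous_monomial _ h

lemma shadow_msetD {Z : Finset (Fin N → ℂ)} {ℓ : MvPolynomial (Fin N) ℂ}
    (hℓV : ℓ ∈ Vh N 1) (j : ℕ) :
    shadow (msetD Z ℓ (j+1)) ⊆ msetD Z ℓ j := by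
  intro g hg
  obtain ⟨μ, hμ, x, hx, rfl⟩ := mem_shadow.1 hg
  obtain ⟨hμV, hμN⟩ := Finset.mem_sdiff.1 hμ
  have hdegμ : Finsupp.degree μ = j + 2 := msetD_degree hμ
  have hdegg : Finsupp.degree (μ - Finsupp.single x 1) = j + 1 := by
    have := degree_sub_single hx
    omega
  rw [msetD, Finset.mem_sdiff]
  constructor
  · refine (mem_lmSet_iff hV_T).2 ⟨monomial (μ - Finsupp.single x 1) 1,
      monomial_mem_Vh hdegg, ?_, lm_monomial one_ne_zero⟩
    simp [MvPolynomial.monomial_eq_zero]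
  · intro hmem
    obtain ⟨F, hFN, hF0, hlmF⟩ := (mem_lmSet_iff (hN_T hℓV)).1 hmem
    have hXF : X x * F ∈ Nh Z ℓ (j+1) := X_mul_mem_Nh hFN
    have hXF0 : X x * F ≠ 0 := mul_ne_zero (MvPolynomial.X_ne_zero x) hF0
    have hlm : lm (X x * F) = μ := by
      rw [lm_X_mul hF0, hlmF, add_comm]
      exact sub_single_add_cancel hx
    have : μ ∈ lmSet (Nh Z ℓ (j+1)) (Tm N (j+2)) :=
      (mem_lmSet_iff (hN_T hℓV)).2 ⟨X x * F, hXF, hXF0, hlm⟩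
    exact absurd this ((Finset.mem_sdiff.1 hμ).2)

/-- The Macaulay-type step : if `Dh(k+1) ≤ k+1` then `Dh(k+2) ≤ Dh(k+1)`. -/
lemma msetD_step {Z : Finset (Fin N → ℂ)} {ℓ : MvPolynomial (Fin N) ℂ}
    (hℓV : ℓ ∈ Vh N 1) (k : ℕ) (hk : (msetD Z ℓ k).card ≤ k + 1) :
    (msetD Z ℓ (k+1)).card ≤ (msetD Z ℓ k).card := by
  rcases Finset.eq_empty_or_nonempty (msetD Z ℓ (k+1)) with he | hne
  · rw [he]
    simp
  · have hmin := min_card_le_shadow_card (Finset.univ : Finset (Fin N)).card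
      Finset.univ le_rfl (k+2) (msetD Z ℓ (k+1)) hne
      (fun f _ => Finset.subset_univ _)
      (fun f hf => msetD_degree hf)
    have hsub : (shadow (msetD Z ℓ (k+1))).card ≤ (msetD Z ℓ k).card :=
      Finset.card_le_card (shadow_msetD hℓV k)
    rcases le_total ((msetD Z ℓ (k+1)).card) (k+2) with h | h
    · rw [min_eq_left h] at hmin
      omega
    · rw [min_eq_right h] at hmin
      omega

end WithEll


lemma coeff_linForm_single {N : ℕ} (a : Fin N → ℂ) (i : Fin N) :
    True := trivial

lemma linForm_mem_Vh {N : ℕ} (a : Fin N → ℂ) : linForm a ∈ Vh N 1 := by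
  apply Submodule.sum_mem
  intro i _
  rw [mem_homogeneousSubmodule]
  exact isHomogeneous_C_mul_X (a i) i

lemma exists_ell {n : ℕ} (Z : Finset (Fin (n+1) → ℂ)) (hZ0 : ∀ v ∈ Z, v ≠ 0) :
    ∃ ℓ : MvPolynomial (Fin (n+1)) ℂ, ℓ ∈ Vh (n+1) 1 ∧ ℓ ≠ 0 ∧ ∀ v ∈ Z, eval v ℓ ≠ 0 := by
  rcases Z.eq_empty_or_nonempty with rfl | ⟨w, hw⟩
  · refine ⟨linForm (fun _ : Fin (n+1) => (1:ℂ)), linForm_mem_Vh _, ?_, by simp⟩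
    intro h
    have h2 : eval (fun _ => (1:ℂ)) (linForm (fun _ : Fin (n+1) => (1:ℂ))) = (n+1 : ℂ) := by
      rw [eval_linForm]
      simp
    rw [h] at h2
    simp only [map_zero] at h2
    have : ((n:ℂ)+1) ≠ 0 := by
      exact_mod_cast Nat.cast_add_one_ne_zero (R := ℂ) n
    exact this h2.symm
  · obtain ⟨a, ha⟩ := exists_good_linear Z hZ0
    refine ⟨linForm a, linForm_mem_Vh _, ?_, fun v hv => by rw [eval_linForm]; exact ha v hv⟩
    intro h
    apply ha w hw
    rw [← eval_linForm a w, h, map_zero]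

lemma hilb_eq_hfun {N : ℕ} (Z : Finset (Fin N → ℂ)) (k : ℕ) :
    hilb Z (k : ℤ) = (hfun Z k : ℤ) := by
  rw [hilb, if_neg (by exact not_lt.2 (Int.natCast_nonneg k))]
  rfl

lemma Dhilb_eq_msetD {N : ℕ} {Z : Finset (Fin N → ℂ)} {ℓ : MvPolynomial (Fin N) ℂ}
    (hℓV : ℓ ∈ Vh N 1) (hℓ0 : ℓ ≠ 0) (hℓeval : ∀ v ∈ Z, eval v ℓ ≠ 0) (k : ℕ) :
    Dhilb Z ((k : ℤ) + 1) = ((msetD Z ℓ k).card : ℤ) := by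
  rw [Dhilb]
  have e1 : ((k:ℤ)+1) = ((k+1:ℕ):ℤ) := by push_cast; ring
  have e2 : ((k+1:ℕ):ℤ) - 1 = ((k:ℕ):ℤ) := by push_cast; ring
  rw [e1, e2, hilb_eq_hfun, hilb_eq_hfun]
  have := msetD_card_eq hℓV hℓ0 hℓeval k
  push_cast
  omega

end PartD

end Stmt13

open Stmt13 in
/-- if `i > 0` and `Dh_Z(i) ≤ i`, then `Dh_Z(i+1) ≤ Dh_Z(i)`; consequently
if moreover `Dh_Z(i) = 0` then `Dh_Z(j) = 0` for all `j ≥ i`. -/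
theorem stmt_13 {n : ℕ} (Z : Finset (Fin (n + 1) → ℂ)) (hZ : ValidPoints Z)
    (i : ℕ) (hi : 0 < i) (hbound : Dhilb Z (i : ℤ) ≤ (i : ℤ)) :
    Dhilb Z ((i : ℤ) + 1) ≤ Dhilb Z (i : ℤ) ∧
    (Dhilb Z (i : ℤ) = 0 → ∀ j : ℤ, (i : ℤ) ≤ j → Dhilb Z j = 0) := by
  classical
  obtain ⟨ℓ, hℓV, hℓ0, hℓeval⟩ := exists_ell Z hZ.1
  obtain ⟨k, rfl⟩ : ∃ k, i = k + 1 := ⟨i - 1, by omega⟩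
  have hDh : ∀ m : ℕ, Dhilb Z ((m:ℤ)+1) = ((msetD Z ℓ m).card : ℤ) :=
    Dhilb_eq_msetD hℓV hℓ0 hℓeval
  have hcast : ((k+1 : ℕ) : ℤ) = (k:ℤ)+1 := by push_cast; ring
  rw [hcast] at hbound
  rw [hDh k] at hbound
  have hb' : (msetD Z ℓ k).card ≤ k + 1 := by exact_mod_cast hbound
  constructor
  · have e : ((k+1:ℕ):ℤ)+1 = ((k+1:ℕ):ℤ)+1 := rfl
    rw [hcast, hDh k]
    have e2 : (k:ℤ)+1+1 = ((k+1:ℕ):ℤ)+1 := by push_cast; ring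
    rw [e2, hDh (k+1)]
    exact_mod_cast msetD_step hℓV k hb'
  · intro h0 j hj
    rw [hcast, hDh k] at h0
    have hz0 : (msetD Z ℓ k).card = 0 := by exact_mod_cast h0
    have hz : ∀ m : ℕ, (msetD Z ℓ (k+m)).card = 0 := by
      intro m
      induction m with
      | zero => simpa using hz0
      | succ m ihm =>
        have hle : (msetD Z ℓ (k+m)).card ≤ (k+m) + 1 := by omega
        have hstep := msetD_step hℓV (k+m) hle
        have e : k + (m+1) = (k+m) + 1 := by omega
        rw [e]
        omega
    rw [hcast] at hj
    obtain ⟨m, hm⟩ : ∃ m : ℕ, j = (k:ℤ) + 1 + m := ⟨(j - ((k:ℤ)+1)).toNat, by omega⟩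
    have e : (k:ℤ) + 1 + (m:ℤ) = (((k+m):ℕ):ℤ) + 1 := by push_cast; ring
    rw [hm, e, hDh (k+m), hz m]
    rfl
end
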